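/- Let n ≥ 5 and let 𝒫 = (P,w) be an essential internal-nonzero-weighted tree with leaf set [n]. For distinct leaves i, j, l, m, the Buneman index ⟨i,j | l,m⟩ holds if and only if at least one of the following holds: (a) there exists r ∈ [n]−{i,j,l,m} such that D_{i,j,l}(𝒫) + D_{m,r,l}(𝒫) ≠ D_{i,r,l}(𝒫) + D_{m,j,l}(𝒫) and the analogous inequalities obtained from this one by swapping i with j and/or l with m also hold; (b) for every r ∈ [n]−{i,j,l,m}, both D_{i,j,r}(𝒫) + D_{m,l,r}(𝒫) ≠ D_{i,m,r}(𝒫) + D_{j,l,r}(𝒫) and D_{i,j,r}(𝒫) + D_{m,l,r}(𝒫) ≠ D_{i,l,r}(𝒫) + D_{j,m,r}(𝒫) hold. -/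

import Mathlib

open SimpleGraph
set_option linter.unusedSectionVars false
set_option maxHeartbeats 1000000

namespace TreeAux
variable {V : Type} [DecidableEq V] {G : SimpleGraph V} (hG : G.IsTree)
include hG

noncomputable def tp (a b : V) : G.Walk a b := (hG.existsUnique_path a b).choose

lemma tp_isPath (a b : V) : (tp hG a b).IsPath := (hG.existsUnique_path a b).choose_spec.1

lemma eq_tp {a b : V} {p : G.Walk a b} (hp : p.IsPath) : p = tp hG a b :=
  (hG.existsUnique_path a b).choose_spec.2 p hp

lemma path_eq {a b : V} {p q : G.Walk a b} (hp : p.IsPath) (hq : q.IsPath) : p = q :=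
  (eq_tp hG hp).trans (eq_tp hG hq).symm

lemma tp_self (a : V) : tp hG a a = Walk.nil := (eq_tp hG Walk.IsPath.nil).symm

lemma tp_reverse (a b : V) : tp hG b a = (tp hG a b).reverse :=
  (eq_tp hG (tp_isPath hG a b).reverse).symm

lemma mem_tp_comm {a b : V} {e : Sym2 V} :
    e ∈ (tp hG a b).edges ↔ e ∈ (tp hG b a).edges := by
  rw [tp_reverse hG b a, Walk.edges_reverse, List.mem_reverse]

lemma support_tp_comm {a b : V} {y : V} :
    y ∈ (tp hG a b).support ↔ y ∈ (tp hG b a).support := by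
  rw [tp_reverse hG b a, Walk.support_reverse, List.mem_reverse]

lemma tp_adj {a b : V} (h : G.Adj a b) : tp hG a b = Walk.cons h Walk.nil :=
  (eq_tp hG (by simp [Walk.cons_isPath_iff, h.ne])).symm

lemma mem_tp_adj {a b : V} (h : G.Adj a b) {e : Sym2 V} :
    e ∈ (tp hG a b).edges ↔ e = s(a, b) := by
  rw [tp_adj hG h]; simp

omit hG in
lemma getVert_one_takeUntil {a b y : V} (p : G.Walk a b) (hy : y ∈ p.support) (hne : y ≠ a) :
    (p.takeUntil y hy).getVert 1 = p.getVert 1 := by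
  cases p with
  | nil => simp at hy; exact absurd hy hne
  | cons h p' =>
    rw [Walk.takeUntil, dif_neg (fun h' => hne h'.symm),
      Walk.getVert_cons_succ, Walk.getVert_cons_succ, Walk.getVert_zero, Walk.getVert_zero]

lemma tp_take {a b x : V} (hx : x ∈ (tp hG a b).support) :
    tp hG a x = (tp hG a b).takeUntil x hx :=
  (eq_tp hG ((tp_isPath hG a b).takeUntil hx)).symm

lemma tp_drop {a b x : V} (hx : x ∈ (tp hG a b).support) :
    tp hG x b = (tp hG a b).dropUntil x hx :=
  (eq_tp hG ((tp_isPath hG a b).dropUntil hx)).symm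

lemma tp_edges_split {a b x : V} (hx : x ∈ (tp hG a b).support) {e : Sym2 V} :
    (e ∈ (tp hG a b).edges ↔ (e ∈ (tp hG a x).edges ∨ e ∈ (tp hG x b).edges)) ∧
    ¬ (e ∈ (tp hG a x).edges ∧ e ∈ (tp hG x b).edges) := by
  have h1 := tp_take hG hx
  have h2 := tp_drop hG hx
  have hsp := Walk.take_spec (tp hG a b) hx
  constructor
  · rw [h1, h2]
    conv_lhs => rw [← hsp]
    rw [Walk.edges_append, List.mem_append]
  · rintro ⟨ha, hb⟩
    have htrail : (((tp hG a b).takeUntil x hx).append ((tp hG a b).dropUntil x hx)).IsTrail := by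
      rw [hsp]; exact (tp_isPath hG a b).isTrail
    have hnd := htrail.edges_nodup
    rw [Walk.edges_append, List.nodup_append] at hnd
    exact hnd.2.2 e (h1 ▸ ha) e (h2 ▸ hb) rfl

lemma tp_support_split {a b x : V} (hx : x ∈ (tp hG a b).support) {y : V} :
    y ∈ (tp hG a b).support ↔ (y ∈ (tp hG a x).support ∨ y ∈ (tp hG x b).support) := by
  conv_lhs => rw [← Walk.take_spec (tp hG a b) hx]
  rw [Walk.mem_support_append_iff, tp_take hG hx, tp_drop hG hx]

lemma median_aux {a b : V} (p : G.Walk a b) (hp : p.IsPath) :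
    ∀ {c : V} (q : G.Walk a c), q.IsPath →
    ∃ (m : V) (wa : G.Walk m a) (wb : G.Walk m b) (wc : G.Walk m c),
      (wa.reverse.append wb).IsPath ∧ (wa.reverse.append wc).IsPath ∧
      (wb.reverse.append wc).IsPath := by
  induction p with
  | nil =>
    intro c q hq
    exact ⟨_, Walk.nil, Walk.nil, q, by simpa using Walk.IsPath.nil, by simpa using hq,
      by simpa using hq⟩
  | @cons a a₁ b h p' ih =>
    intro c q hq
    cases q with
    | nil =>
      refine ⟨a, Walk.nil, Walk.cons h p', Walk.nil, by simpa using hp, by simp, ?_⟩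
      · simpa using hp.reverse
    | @cons _ a₂ _ h2 q' =>
      by_cases haa : a₁ = a₂
      · subst haa
        obtain ⟨m, wa', wb, wc, c1, c2, c3⟩ := ih hp.of_cons q' hq.of_cons
        refine ⟨m, wa'.concat h.symm, wb, wc, ?_, ?_, c3⟩
        · have hrw : (wa'.concat h.symm).reverse.append wb
              = Walk.cons h (wa'.reverse.append wb) := by
            rw [Walk.reverse_concat]; rfl
          rw [hrw, path_eq hG c1 hp.of_cons]; exact hp
        · have hrw : (wa'.concat h.symm).reverse.append wc
              = Walk.cons h (wa'.reverse.append wc) := by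
            rw [Walk.reverse_concat]; rfl
          rw [hrw, path_eq hG c2 hq.of_cons]; exact hq
      · refine ⟨a, Walk.nil, Walk.cons h p', Walk.cons h2 q', by simpa using hp,
          by simpa using hq, ?_⟩
        have claim : ∀ y, y ∈ (Walk.cons h p').support → y ∈ (Walk.cons h2 q').support → y = a := by
          intro y hy1 hy2
          by_contra hne
          have e1 := getVert_one_takeUntil (Walk.cons h p') hy1 hne
          have e2 := getVert_one_takeUntil (Walk.cons h2 q') hy2 hne
          have heq : (Walk.cons h p').takeUntil y hy1 = (Walk.cons h2 q').takeUntil y hy2 :=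
            path_eq hG (hp.takeUntil hy1) (hq.takeUntil hy2)
          rw [heq, e2] at e1
          rw [Walk.getVert_cons_succ, Walk.getVert_cons_succ, Walk.getVert_zero, Walk.getVert_zero] at e1
          exact haa e1.symm
        rw [Walk.isPath_def, Walk.support_append, List.nodup_append]
        refine ⟨?_, ?_, ?_⟩
        · rw [Walk.support_reverse, List.nodup_reverse]; exact hp.support_nodup
        · have hnd := hq.support_nodup
          rw [Walk.support_cons] at hnd
          rw [Walk.support_cons]
          exact hnd.of_cons
        · intro y hy1 y' hy2 hyy
          subst hyy
          have hy1' : y ∈ (Walk.cons h p').support := by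
            rw [Walk.support_reverse, List.mem_reverse] at hy1; exact hy1
          rw [Walk.support_cons] at hy2
          have hy2' : y ∈ q'.support := hy2
          have hya : y = a := claim y hy1'
            (by rw [Walk.support_cons]; exact List.mem_cons_of_mem _ hy2')
          have hna : a ∉ q'.support := by
            have hnd := hq.support_nodup
            rw [Walk.support_cons] at hnd
            exact (List.nodup_cons.mp hnd).1
          exact hna (hya ▸ hy2')

lemma median (a b c : V) :
    ∃ (m : V) (wa : G.Walk m a) (wb : G.Walk m b) (wc : G.Walk m c),
      tp hG a b = wa.reverse.append wb ∧ tp hG a c = wa.reverse.append wc ∧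
      tp hG b c = wb.reverse.append wc ∧
      (wa.reverse.append wb).IsPath ∧ (wa.reverse.append wc).IsPath ∧
      (wb.reverse.append wc).IsPath := by
  obtain ⟨m, wa, wb, wc, h1, h2, h3⟩ :=
    median_aux hG (tp hG a b) (tp_isPath hG a b) (tp hG a c) (tp_isPath hG a c)
  exact ⟨m, wa, wb, wc, (eq_tp hG h1).symm, (eq_tp hG h2).symm, (eq_tp hG h3).symm, h1, h2, h3⟩

/-- parity (XOR) of edge membership along a triangle of paths. -/
lemma xor_tri (a x b : V) (e : Sym2 V) :
    e ∈ (tp hG a b).edges ↔ Xor' (e ∈ (tp hG a x).edges) (e ∈ (tp hG x b).edges) := by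
  obtain ⟨m, wa, wb, wx, h1, h2, h3, p1, p2, p3⟩ := median hG a b x
  have mab : e ∈ (tp hG a b).edges ↔ (e ∈ wa.edges ∨ e ∈ wb.edges) := by
    rw [h1, Walk.edges_append, List.mem_append, Walk.edges_reverse, List.mem_reverse]
  have max : e ∈ (tp hG a x).edges ↔ (e ∈ wa.edges ∨ e ∈ wx.edges) := by
    rw [h2, Walk.edges_append, List.mem_append, Walk.edges_reverse, List.mem_reverse]
  have mxb : e ∈ (tp hG x b).edges ↔ (e ∈ wb.edges ∨ e ∈ wx.edges) := by
    rw [mem_tp_comm hG, h3, Walk.edges_append, List.mem_append, Walk.edges_reverse,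
      List.mem_reverse]
  have dab : ¬ (e ∈ wa.edges ∧ e ∈ wb.edges) := by
    rintro ⟨ha, hb⟩
    have hnd := p1.isTrail.edges_nodup
    rw [Walk.edges_append, List.nodup_append] at hnd
    exact hnd.2.2 e (by rw [Walk.edges_reverse, List.mem_reverse]; exact ha) e hb rfl
  have dax : ¬ (e ∈ wa.edges ∧ e ∈ wx.edges) := by
    rintro ⟨ha, hb⟩
    have hnd := p2.isTrail.edges_nodup
    rw [Walk.edges_append, List.nodup_append] at hnd
    exact hnd.2.2 e (by rw [Walk.edges_reverse, List.mem_reverse]; exact ha) e hb rfl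
  have dbx : ¬ (e ∈ wb.edges ∧ e ∈ wx.edges) := by
    rintro ⟨ha, hb⟩
    have hnd := p3.isTrail.edges_nodup
    rw [Walk.edges_append, List.nodup_append] at hnd
    exact hnd.2.2 e (by rw [Walk.edges_reverse, List.mem_reverse]; exact ha) e hb rfl
  rw [mab, max, mxb, Xor', xor_def]
  tauto

lemma support_union (a b x : V) {y : V} (hy : y ∈ (tp hG a b).support) :
    y ∈ (tp hG a x).support ∨ y ∈ (tp hG x b).support := by
  obtain ⟨m, wa, wb, wx, h1, h2, h3, p1, p2, p3⟩ := median hG a b x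
  rw [h1, Walk.mem_support_append_iff, Walk.support_reverse, List.mem_reverse] at hy
  rcases hy with hy | hy
  · left; rw [h2, Walk.mem_support_append_iff, Walk.support_reverse, List.mem_reverse]
    exact Or.inl hy
  · right; rw [support_tp_comm hG, h3, Walk.mem_support_append_iff]
    exact Or.inl (by rw [Walk.support_reverse, List.mem_reverse]; exact hy)

/-- second vertex on the unique path from `x` to `v`. -/
noncomputable def sv (x v : V) : V := (tp hG x v).getVert 1

lemma tp_not_nil {x v : V} (h : v ≠ x) : ¬ (tp hG x v).Nil := by
  intro hn
  rw [Walk.nil_iff_support_eq] at hn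
  have := Walk.end_mem_support (tp hG x v)
  rw [hn] at this
  simp at this
  exact h this

lemma sv_adj {x v : V} (h : v ≠ x) : G.Adj x (sv hG x v) :=
  Walk.adj_snd (tp_not_nil hG h)

lemma sv_eq_of_mem {x v y : V} (hy : y ∈ (tp hG x v).support) (hne : y ≠ x) :
    sv hG x y = sv hG x v := by
  unfold sv
  rw [tp_take hG hy]
  exact getVert_one_takeUntil _ hy hne

lemma sv_first_edge {x v : V} (h : v ≠ x) : s(x, sv hG x v) ∈ (tp hG x v).edges := by
  have hn := tp_not_nil hG h
  cases hp : tp hG x v with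
  | nil => rw [hp] at hn; simp at hn
  | @cons _ u _ ha p' =>
    have hsv : sv hG x v = u := by unfold sv; rw [hp, Walk.getVert_cons_succ, Walk.getVert_zero]
    simp [hsv]

lemma sv_of_edge {x v y : V} (he : s(x, y) ∈ (tp hG x v).edges) : y = sv hG x v := by
  cases hp : tp hG x v with
  | nil => rw [hp] at he; simp at he
  | @cons _ u _ ha p' =>
    have hsv : sv hG x v = u := by unfold sv; rw [hp, Walk.getVert_cons_succ, Walk.getVert_zero]
    rw [hp] at he
    rw [Walk.edges_cons, List.mem_cons] at he
    rcases he with he | he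
    · rw [Sym2.eq_iff] at he
      rcases he with ⟨-, h2⟩ | ⟨h1, h2⟩
      · rw [hsv]; exact h2
      · exfalso; rw [← h1] at ha; exact G.loopless.irrefl x ha
    · exfalso
      have hx : x ∈ p'.support := Walk.fst_mem_support_of_mem_edges p' he
      have hp' : (tp hG x v).IsPath := tp_isPath hG x v
      rw [hp] at hp'
      rw [Walk.cons_isPath_iff] at hp'
      exact hp'.2 hx

/-- two paths out of `x` sharing an edge share their second vertex. -/
lemma shared_sv {x a b : V} {e : Sym2 V} (ha : e ∈ (tp hG x a).edges)
    (hb : e ∈ (tp hG x b).edges) : a ≠ x ∧ b ≠ x ∧ sv hG x a = sv hG x b := by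
  obtain ⟨u1, u2⟩ := e
  have hu1a : u1 ∈ (tp hG x a).support := Walk.fst_mem_support_of_mem_edges _ ha
  have hu2a : u2 ∈ (tp hG x a).support := Walk.snd_mem_support_of_mem_edges _ ha
  have hu1b : u1 ∈ (tp hG x b).support := Walk.fst_mem_support_of_mem_edges _ hb
  have hu2b : u2 ∈ (tp hG x b).support := Walk.snd_mem_support_of_mem_edges _ hb
  have hadj : G.Adj u1 u2 := Walk.adj_of_mem_edges _ ha
  have hane : a ≠ x := by rintro rfl; rw [tp_self hG] at ha; simp at ha
  have hbne : b ≠ x := by rintro rfl; rw [tp_self hG] at hb; simp at hb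
  refine ⟨hane, hbne, ?_⟩
  by_cases h1 : u1 = x
  · subst h1
    have e1 : u2 = sv hG u1 a := sv_of_edge hG ha
    have e2 : u2 = sv hG u1 b := sv_of_edge hG hb
    rw [← e1, ← e2]
  · rw [← sv_eq_of_mem hG hu1a h1, ← sv_eq_of_mem hG hu1b h1]

omit hG in
/-- along a walk from inside `S` to outside `S` there is a frontier edge. -/
lemma frontier {a b : V} (p : G.Walk a b) (S : Set V) :
    a ∈ S → b ∉ S → ∃ u x, u ∈ S ∧ x ∉ S ∧ s(u, x) ∈ p.edges := by
  induction p with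
  | nil => exact fun ha hb => absurd ha hb
  | @cons a a₁ b h p' ih =>
    intro ha hb
    by_cases h1 : a₁ ∈ S
    · obtain ⟨u, x, h2, h3, h4⟩ := ih h1 hb
      exact ⟨u, x, h2, h3, by simp [h4]⟩
    · exact ⟨a, a₁, ha, h1, by simp⟩

lemma step_far {c z z₂ v : V} (h : G.Adj c z) (h2 : G.Adj z z₂) (hne : z₂ ≠ c)
    (hv : z ∉ (tp hG z₂ v).support) : c ∉ (tp hG z v).support := by
  have hcons : tp hG z v = Walk.cons h2 (tp hG z₂ v) :=
    (eq_tp hG (((tp_isPath hG z₂ v).cons hv))).symm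
  rw [hcons, Walk.support_cons]
  intro hc
  rw [List.mem_cons] at hc
  rcases hc with hc | hc
  · exact h.ne hc
  · -- c on the path from z₂ to v : contradiction with unique path z-c
    have hz : z ∉ (tp hG z₂ c).support := by
      rw [tp_take hG hc]
      intro hmem
      exact hv (Walk.support_takeUntil_subset _ hc hmem)
    have h1 : tp hG z c = Walk.cons h2 (tp hG z₂ c) :=
      (eq_tp hG ((tp_isPath hG z₂ c).cons hz)).symm
    have h0 : tp hG z c = Walk.cons h.symm Walk.nil := tp_adj hG h.symm
    have hlen : (Walk.cons h.symm (Walk.nil : G.Walk c c)).length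
        = (Walk.cons h2 (tp hG z₂ c)).length := by rw [← h0, ← h1]
    simp [Walk.length_cons] at hlen
    have hl0 : (tp hG z₂ c).length = 0 := by
      have := congrArg Walk.length (h0.symm.trans h1)
      simp only [Walk.length_cons, Walk.length_nil] at this; omega
    exact hne (Walk.eq_of_length_eq_zero hl0)

lemma exists_far_aux [Fintype V] :
    ∀ (k : ℕ) (c z : V), G.Adj c z →
      (Finset.univ.filter (fun v => c ∉ (tp hG z v).support)).card ≤ k →
      ∃ t : V, (G.neighborSet t).ncard = 1 ∧ c ∉ (tp hG z t).support := by
  intro k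
  induction k with
  | zero =>
    intro c z h hcard
    exfalso
    have hz : z ∈ Finset.univ.filter (fun v => c ∉ (tp hG z v).support) := by
      rw [Finset.mem_filter]
      refine ⟨Finset.mem_univ _, ?_⟩
      rw [tp_self hG]
      simp
      exact h.ne
    have := Finset.card_pos.mpr ⟨z, hz⟩
    omega
  | succ k ih =>
    intro c z h hcard
    by_cases hdeg : (G.neighborSet z).ncard = 1
    · refine ⟨z, hdeg, ?_⟩
      rw [tp_self hG]
      simp
      exact h.ne
    · -- find another neighbor z₂ of z
      have hfin : (G.neighborSet z).Finite := Set.toFinite _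
      obtain ⟨z₂, hz₂, hz₂c⟩ : ∃ z₂ ∈ G.neighborSet z, z₂ ≠ c := by
        by_contra hcon
        push_neg at hcon
        have hsub : G.neighborSet z ⊆ {c} := fun y hy => hcon y hy
        have h1 : (G.neighborSet z).ncard ≤ 1 := by
          simpa using Set.ncard_le_ncard hsub (Set.finite_singleton c)
        have h2 : 0 < (G.neighborSet z).ncard :=
          (Set.ncard_pos (Set.toFinite _)).mpr ⟨c, h.symm⟩
        omega
      have h2 : G.Adj z z₂ := hz₂
      -- measure decreases
      have hsub : (Finset.univ.filter (fun v => z ∉ (tp hG z₂ v).support))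
          ⊆ (Finset.univ.filter (fun v => c ∉ (tp hG z v).support)) := by
        intro v hv
        rw [Finset.mem_filter] at hv ⊢
        exact ⟨Finset.mem_univ _, step_far hG h h2 hz₂c hv.2⟩
      have hzmem : z ∈ Finset.univ.filter (fun v => c ∉ (tp hG z v).support) := by
        rw [Finset.mem_filter]
        refine ⟨Finset.mem_univ _, ?_⟩
        rw [tp_self hG]; simp; exact h.ne
      have hznot : z ∉ Finset.univ.filter (fun v => z ∉ (tp hG z₂ v).support) := by
        rw [Finset.mem_filter]
        rintro ⟨-, hzz⟩
        exact hzz (Walk.end_mem_support _)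
      have hlt : (Finset.univ.filter (fun v => z ∉ (tp hG z₂ v).support)).card
          < (Finset.univ.filter (fun v => c ∉ (tp hG z v).support)).card :=
        Finset.card_lt_card (Finset.ssubset_iff_of_subset hsub |>.mpr ⟨z, hzmem, hznot⟩)
      obtain ⟨t, ht1, ht2⟩ := ih z z₂ h2 (by omega)
      exact ⟨t, ht1, step_far hG h h2 hz₂c ht2⟩

lemma exists_far [Fintype V] {c z : V} (h : G.Adj c z) :
    ∃ t : V, (G.neighborSet t).ncard = 1 ∧ c ∉ (tp hG z t).support :=
  exists_far_aux hG _ c z h le_rfl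

/-- an interior vertex of a path has two distinct neighbours. -/
lemma interior_two {a b x : V} (hx : x ∈ (tp hG a b).support) (hxa : x ≠ a) (hxb : x ≠ b) :
    sv hG x a ≠ sv hG x b ∧ G.Adj x (sv hG x a) ∧ G.Adj x (sv hG x b) := by
  have ha : G.Adj x (sv hG x a) := sv_adj hG (Ne.symm hxa)
  have hb : G.Adj x (sv hG x b) := sv_adj hG (Ne.symm hxb)
  refine ⟨?_, ha, hb⟩
  intro heq
  have e1 : s(x, sv hG x a) ∈ (tp hG x a).edges := sv_first_edge hG (Ne.symm hxa)
  have e2 : s(x, sv hG x b) ∈ (tp hG x b).edges := sv_first_edge hG (Ne.symm hxb)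
  rw [← heq] at e2
  have e1' : s(x, sv hG x a) ∈ (tp hG a x).edges := (mem_tp_comm hG).mp e1
  exact (tp_edges_split hG hx).2 ⟨e1', e2⟩

lemma firstHit {a b : V} (p : G.Walk a b) (hp : p.IsPath) (S : Finset (Sym2 V)) :
    (∀ e ∈ S, e ∈ p.edges) → S.Nonempty →
    ∃ e₁ ∈ S, ∃ c, c ∈ p.support ∧ e₁ ∈ (tp hG a c).edges ∧
      (∀ e ∈ S, e ∈ (tp hG a c).edges → e = e₁) := by
  induction p with
  | nil =>
    intro hS hne
    obtain ⟨e, he⟩ := hne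
    have := hS e he
    simp at this
  | @cons a a₁ b h p' ih =>
    intro hS hne
    by_cases hhead : s(a, a₁) ∈ S
    · refine ⟨s(a, a₁), hhead, a₁, by simp, ?_, ?_⟩
      · rw [mem_tp_adj hG h]
      · intro e heS heE
        rw [mem_tp_adj hG h] at heE
        exact heE
    · have hS' : ∀ e ∈ S, e ∈ p'.edges := by
        intro e he
        have := hS e he
        rw [Walk.edges_cons, List.mem_cons] at this
        rcases this with h1 | h1
        · exact absurd (h1 ▸ he) hhead
        · exact h1
      obtain ⟨e₁, he₁, c, hc, he₁c, huniq⟩ := ih hp.of_cons hS' hne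
      have hana : a ∉ (tp hG a₁ c).support := by
        have hsub : (tp hG a₁ c).support ⊆ p'.support := by
          have hp'tp : p' = tp hG a₁ b := eq_tp hG hp.of_cons
          have hc' : c ∈ (tp hG a₁ b).support := hp'tp ▸ hc
          rw [tp_take hG hc']
          intro y hy
          have := Walk.support_takeUntil_subset _ hc' hy
          rw [← hp'tp] at this
          exact this
        intro hmem
        have hp2 := hp
        rw [Walk.cons_isPath_iff] at hp2
        exact hp2.2 (hsub hmem)
      have hcons : tp hG a c = Walk.cons h (tp hG a₁ c) :=
        (eq_tp hG ((tp_isPath hG a₁ c).cons hana)).symm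
      refine ⟨e₁, he₁, c, by simp [hc], ?_, ?_⟩
      · rw [hcons, Walk.edges_cons]
        exact List.mem_cons_of_mem _ he₁c
      · intro e heS heE
        rw [hcons, Walk.edges_cons, List.mem_cons] at heE
        rcases heE with h1 | h1
        · exact absurd (h1 ▸ heS) hhead
        · exact huniq e heS h1

lemma median_three {a b c m : V} {wa : G.Walk m a} {wb : G.Walk m b} {wc : G.Walk m c}
    (p1 : (wa.reverse.append wb).IsPath) (p2 : (wa.reverse.append wc).IsPath)
    (p3 : (wb.reverse.append wc).IsPath) (ha : m ≠ a) (hb : m ≠ b) (hc : m ≠ c) :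
    sv hG m a ≠ sv hG m b ∧ sv hG m a ≠ sv hG m c ∧ sv hG m b ≠ sv hG m c ∧
    G.Adj m (sv hG m a) ∧ G.Adj m (sv hG m b) ∧ G.Adj m (sv hG m c) := by
  have hwa : wa = tp hG m a := eq_tp hG ((Walk.isPath_reverse_iff wa).mp p1.of_append_left)
  have hwb : wb = tp hG m b := eq_tp hG (p1.of_append_right)
  have hwc : wc = tp hG m c := eq_tp hG (p2.of_append_right)
  have e1 : s(m, sv hG m a) ∈ wa.edges := hwa ▸ sv_first_edge hG (Ne.symm ha)
  have e2 : s(m, sv hG m b) ∈ wb.edges := hwb ▸ sv_first_edge hG (Ne.symm hb)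
  have e3 : s(m, sv hG m c) ∈ wc.edges := hwc ▸ sv_first_edge hG (Ne.symm hc)
  have d12 : ¬ (s(m, sv hG m a) ∈ wa.edges ∧ s(m, sv hG m a) ∈ wb.edges) := by
    rintro ⟨x1, x2⟩
    have hnd := p1.isTrail.edges_nodup
    rw [Walk.edges_append, List.nodup_append] at hnd
    exact hnd.2.2 s(m, sv hG m a) (by rw [Walk.edges_reverse, List.mem_reverse]; exact x1) s(m, sv hG m a) x2 rfl
  have d13 : ¬ (s(m, sv hG m a) ∈ wa.edges ∧ s(m, sv hG m a) ∈ wc.edges) := by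
    rintro ⟨x1, x2⟩
    have hnd := p2.isTrail.edges_nodup
    rw [Walk.edges_append, List.nodup_append] at hnd
    exact hnd.2.2 s(m, sv hG m a) (by rw [Walk.edges_reverse, List.mem_reverse]; exact x1) s(m, sv hG m a) x2 rfl
  have d23 : ¬ (s(m, sv hG m b) ∈ wb.edges ∧ s(m, sv hG m b) ∈ wc.edges) := by
    rintro ⟨x1, x2⟩
    have hnd := p3.isTrail.edges_nodup
    rw [Walk.edges_append, List.nodup_append] at hnd
    exact hnd.2.2 s(m, sv hG m b) (by rw [Walk.edges_reverse, List.mem_reverse]; exact x1) s(m, sv hG m b) x2 rfl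
  refine ⟨?_, ?_, ?_, sv_adj hG (Ne.symm ha), sv_adj hG (Ne.symm hb), sv_adj hG (Ne.symm hc)⟩
  · intro heq; exact d12 ⟨e1, by rw [heq]; exact e2⟩
  · intro heq; exact d13 ⟨e1, by rw [heq]; exact e3⟩
  · intro heq; exact d23 ⟨e2, by rw [heq]; exact e3⟩

lemma three_le_ncard {x y₁ y₂ y₃ : V} [Fintype V] (h12 : y₁ ≠ y₂) (h13 : y₁ ≠ y₃)
    (h23 : y₂ ≠ y₃) (a1 : G.Adj x y₁) (a2 : G.Adj x y₂) (a3 : G.Adj x y₃) :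
    2 < (G.neighborSet x).ncard := by
  have hsub : ({y₁, y₂, y₃} : Set V) ⊆ G.neighborSet x := by
    intro y hy
    rcases hy with rfl | rfl | rfl
    exacts [a1, a2, a3]
  have h3 : ({y₁, y₂, y₃} : Set V).ncard = 3 := by
    rw [Set.ncard_insert_of_notMem (by simp [h12, h13]),
      Set.ncard_insert_of_notMem (by simp [h23]), Set.ncard_singleton]
  have := Set.ncard_le_ncard hsub (Set.toFinite _)
  omega

lemma sv_ne {b c m : V} {wb : G.Walk m b} {wc : G.Walk m c}
    (p3 : (wb.reverse.append wc).IsPath) (hb : m ≠ b) (hc : m ≠ c) :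
    sv hG m b ≠ sv hG m c := by
  have hwb : wb = tp hG m b := eq_tp hG ((Walk.isPath_reverse_iff wb).mp p3.of_append_left)
  have hwc : wc = tp hG m c := eq_tp hG p3.of_append_right
  have e2 : s(m, sv hG m b) ∈ wb.edges := hwb ▸ sv_first_edge hG (Ne.symm hb)
  have e3 : s(m, sv hG m c) ∈ wc.edges := hwc ▸ sv_first_edge hG (Ne.symm hc)
  intro heq
  have hnd := p3.isTrail.edges_nodup
  rw [Walk.edges_append, List.nodup_append] at hnd
  exact hnd.2.2 s(m, sv hG m b) (by rw [Walk.edges_reverse, List.mem_reverse]; exact e2) s(m, sv hG m b) (heq ▸ e3) rfl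

omit hG in
lemma two_le_ncard {x y₁ y₂ : V} [Fintype V] (h12 : y₁ ≠ y₂)
    (a1 : G.Adj x y₁) (a2 : G.Adj x y₂) : 2 ≤ (G.neighborSet x).ncard := by
  have hsub : ({y₁, y₂} : Set V) ⊆ G.neighborSet x := by
    intro y hy
    rcases hy with rfl | rfl
    exacts [a1, a2]
  have h2 : ({y₁, y₂} : Set V).ncard = 2 := by
    rw [Set.ncard_insert_of_notMem (by simp [h12]), Set.ncard_singleton]
  have := Set.ncard_le_ncard hsub (Set.toFinite _)
  omega

lemma sv_adj_eq {c z : V} (h : G.Adj c z) : sv hG c z = z := by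
  unfold sv
  rw [tp_adj hG h, Walk.getVert_cons_succ, Walk.getVert_zero]

/-- everything hanging on the path from `a` to `b`, seen from an outside vertex `x`,
is in the same direction as `a`. -/
lemma sector {a b x y : V} (hy : y ∈ (tp hG a b).support) (hx : x ∉ (tp hG a b).support) :
    sv hG x y = sv hG x a := by
  obtain ⟨m, wa, wb, wc, e1, e2, e3, p1, p2, p3⟩ := median hG a y x
  have hm_ay : m ∈ (tp hG a y).support := by
    rw [e1, Walk.mem_support_append_iff]
    left
    rw [Walk.support_reverse, List.mem_reverse]
    exact Walk.start_mem_support wa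
  have hsub : (tp hG a y).support ⊆ (tp hG a b).support := by
    rw [tp_take hG hy]
    exact Walk.support_takeUntil_subset _ hy
  have hmx : m ≠ x := fun h => hx (hsub (h ▸ hm_ay))
  have hm_xy : m ∈ (tp hG x y).support := by
    rw [support_tp_comm hG, e3, Walk.mem_support_append_iff]
    left
    rw [Walk.support_reverse, List.mem_reverse]
    exact Walk.start_mem_support wb
  have hm_xa : m ∈ (tp hG x a).support := by
    rw [support_tp_comm hG, e2, Walk.mem_support_append_iff]
    left
    rw [Walk.support_reverse, List.mem_reverse]
    exact Walk.start_mem_support wa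
  rw [← sv_eq_of_mem hG hm_xy hmx, ← sv_eq_of_mem hG hm_xa hmx]

omit hG in
lemma edge_endpoint_ne {a b a' b' : V} {W1 : G.Walk a b} {W2 : G.Walk a' b'} {e : Sym2 V} (x : V)
    (h1 : e ∈ W1.edges) (h2 : e ∈ W2.edges) :
    ∃ y, y ≠ x ∧ y ∈ W1.support ∧ y ∈ W2.support := by
  induction e with
  | h u1 u2 =>
    have hadj : G.Adj u1 u2 := SimpleGraph.Walk.adj_of_mem_edges W1 h1
    by_cases hu : u1 = x
    · refine ⟨u2, ?_, SimpleGraph.Walk.snd_mem_support_of_mem_edges W1 h1,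
        SimpleGraph.Walk.snd_mem_support_of_mem_edges W2 h2⟩
      intro h
      exact hadj.ne (by rw [hu, h])
    · exact ⟨u1, hu, SimpleGraph.Walk.fst_mem_support_of_mem_edges W1 h1,
        SimpleGraph.Walk.fst_mem_support_of_mem_edges W2 h2⟩

end TreeAux
/-- A weighted finite tree with leaf set labelled by `Fin n`:
a finite vertex type `V`, a tree `G` on `V`, an injective labelling `leaf` of the
degree-one vertices by `Fin n` (every vertex of degree one is a labelled leaf),
and a weight function `w` on edges (zero off the edge set). -/
structure WTree (n : ℕ) where
  V : Type
  fintypeV : Fintype V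
  G : SimpleGraph V
  isTree : G.IsTree
  leaf : Fin n → V
  leafInj : Function.Injective leaf
  leafSpec : ∀ v : V, (G.neighborSet v).ncard = 1 ↔ v ∈ Set.range leaf
  w : Sym2 V → ℝ
  wSupport : ∀ e, e ∉ G.edgeSet → w e = 0

namespace WTree

variable {n : ℕ}

/-- The degree of a vertex. -/
noncomputable def deg (T : WTree n) (v : T.V) : ℕ := (T.G.neighborSet v).ncard

/-- A node is a vertex of degree `> 2`. -/
def IsNode (T : WTree n) (v : T.V) : Prop := 2 < T.deg v

/-- A tree is essential if it has no vertices of degree `2`. -/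
def Essential (T : WTree n) : Prop := ∀ v : T.V, T.deg v ≠ 2

/-- The set of edges lying on the path between two vertices. -/
def pathEdges (T : WTree n) (u v : T.V) : Set (Sym2 T.V) :=
  {e | ∃ p : T.G.Walk u v, p.IsPath ∧ e ∈ p.edges}

/-- The edge set of the minimal subtree containing the leaves in `S`. -/
def subtreeEdges (T : WTree n) (S : Set (Fin n)) : Set (Sym2 T.V) :=
  {e | ∃ i ∈ S, ∃ j ∈ S, e ∈ T.pathEdges (T.leaf i) (T.leaf j)}

/-- `D_I(T)`: the weight of the minimal subtree of `T` containing the leaves in `I`. -/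
noncomputable def D (T : WTree n) (I : Finset (Fin n)) : ℝ :=
  ∑ᶠ e ∈ T.subtreeEdges ↑I, T.w e

/-- The total weight of the tree. -/
noncomputable def Dtot (T : WTree n) : ℝ := ∑ᶠ e ∈ T.G.edgeSet, T.w e

/-- An edge is a twig edge if it lies on the path from some leaf to the nearest node. -/
def IsTwigEdge (T : WTree n) (e : Sym2 T.V) : Prop :=
  ∃ (i : Fin n) (v : T.V), T.IsNode v ∧
    ∃ p : T.G.Walk (T.leaf i) v, p.IsPath ∧
      (∀ u ∈ p.support, T.IsNode u → u = v) ∧ e ∈ p.edges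

/-- Internal-nonzero-weighted: every internal (non-twig) edge has nonzero weight. -/
def InternalNonzero (T : WTree n) : Prop :=
  ∀ e ∈ T.G.edgeSet, ¬ T.IsTwigEdge e → T.w e ≠ 0

/-- Positive-weighted: all edge weights are positive. -/
def PositiveWeighted (T : WTree n) : Prop := ∀ e ∈ T.G.edgeSet, 0 < T.w e

/-- The leaves lying on the side of vertex `a` after removing the edge `e`. -/
def sideLeaves (T : WTree n) (e : Sym2 T.V) (a : T.V) : Set (Fin n) :=
  {i | e ∉ T.pathEdges (T.leaf i) a}

/-- A pseudostar of kind `(n, k)`: every edge divides the leaf set into two parts,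
at least one of which has cardinality `≥ k`. -/
def IsPseudostar (T : WTree n) (k : ℕ) : Prop :=
  ∀ a b : T.V, T.G.Adj a b →
    k ≤ (T.sideLeaves s(a, b) a).ncard ∨ k ≤ (T.sideLeaves s(a, b) b).ncard

/-- `T` realizes the family `D₀` of `k`-weights. -/
def Realizes (T : WTree n) (k : ℕ) (D₀ : Finset (Fin n) → ℝ) : Prop :=
  ∀ I : Finset (Fin n), I.card = k → T.D I = D₀ I

/-- Two leaves are neighbours if the path between them contains exactly one node. -/
def Neighbours (T : WTree n) (i j : Fin n) : Prop :=
  i ≠ j ∧ ∃ p : T.G.Walk (T.leaf i) (T.leaf j), p.IsPath ∧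
    ∃! v : T.V, v ∈ p.support ∧ T.IsNode v

/-- The Buneman index `⟨i,j | l,m⟩` holds iff the paths `i–j` and `l–m` are disjoint,
equivalently in `T|_{i,j,l,m}` the leaves `i,j` are neighbours, `l,m` are neighbours
and `i,l` are not neighbours. -/
def Buneman (T : WTree n) (i j l m : Fin n) : Prop :=
  ∀ (p : T.G.Walk (T.leaf i) (T.leaf j)) (q : T.G.Walk (T.leaf l) (T.leaf m)),
    p.IsPath → q.IsPath → ∀ v : T.V, v ∈ p.support → v ∉ q.support

/-- The minimal subtree spanned by the four leaves `i,j,l,m` is a star (i.e. all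
pairwise paths share a common vertex). -/
def StarQuartet (T : WTree n) (i j l m : Fin n) : Prop :=
  ∃ c : T.V, ∀ x ∈ ({i, j, l, m} : Set (Fin n)), ∀ y ∈ ({i, j, l, m} : Set (Fin n)),
    x ≠ y → ∀ p : T.G.Walk (T.leaf x) (T.leaf y), p.IsPath → c ∈ p.support

/-- A cherry: a set of leaves pairwise neighbours. -/
def IsCherry (T : WTree n) (C : Set (Fin n)) : Prop :=
  ∀ i ∈ C, ∀ j ∈ C, i ≠ j → T.Neighbours i j

/-- A complete cherry: a cherry not strictly contained in another cherry. -/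
def IsCompleteCherry (T : WTree n) (C : Set (Fin n)) : Prop :=
  T.IsCherry C ∧ ¬ ∃ C' : Set (Fin n), T.IsCherry C' ∧ C ⊂ C'

/-- A star is a tree with only one node. -/
def IsStar (T : WTree n) : Prop := ∃! v : T.V, T.IsNode v

/-- `x` is the median of the three leaves `a,b,c`: it lies on all three pairwise paths. -/
def IsMedian (T : WTree n) (a b c : Fin n) (x : T.V) : Prop :=
  (∀ p : T.G.Walk (T.leaf a) (T.leaf b), p.IsPath → x ∈ p.support) ∧
  (∀ p : T.G.Walk (T.leaf a) (T.leaf c), p.IsPath → x ∈ p.support) ∧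
  (∀ p : T.G.Walk (T.leaf b) (T.leaf c), p.IsPath → x ∈ p.support)

/-- The weight of the twig associated to the leaf `i` (the path from the leaf to the
nearest node). -/
noncomputable def twigWeight (T : WTree n) (i : Fin n) : ℝ :=
  ∑ᶠ e ∈ {e : Sym2 T.V | ∃ v : T.V, T.IsNode v ∧
      ∃ p : T.G.Walk (T.leaf i) v, p.IsPath ∧
        (∀ u ∈ p.support, T.IsNode u → u = v) ∧ e ∈ p.edges}, T.w e

/-- Two weighted trees with leaf set `Fin n` are equal (isomorphic respecting the
leaf labels and the weights). -/
def Isom (T T' : WTree n) : Prop :=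
  ∃ φ : T.V ≃ T'.V,
    (∀ a b : T.V, T.G.Adj a b ↔ T'.G.Adj (φ a) (φ b)) ∧
    (∀ i : Fin n, φ (T.leaf i) = T'.leaf i) ∧
    (∀ a b : T.V, T.w s(a, b) = T'.w s(φ a, φ b))

/-- `T'` is obtained from `T` by the `k`-IO operation on the edge `{a, b}`:
the edge divides the leaf set into two parts each of cardinality `< k`; it is
contracted (via the quotient map `φ`) and `w{a,b}/k` is added to the weight of
every twig (i.e. to every pendant edge). -/
def IOStepOn (k : ℕ) (T T' : WTree n) (a b : T.V) : Prop :=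
  T.G.Adj a b ∧
  (T.sideLeaves s(a, b) a).ncard < k ∧ (T.sideLeaves s(a, b) b).ncard < k ∧
  ∃ φ : T.V → T'.V,
    Function.Surjective φ ∧ φ a = φ b ∧
    (∀ x y : T.V, φ x = φ y → x = y ∨ s(x, y) = s(a, b)) ∧
    (∀ i : Fin n, φ (T.leaf i) = T'.leaf i) ∧
    (∀ u v : T'.V, T'.G.Adj u v ↔
      ∃ x y : T.V, φ x = u ∧ φ y = v ∧ T.G.Adj x y ∧ s(x, y) ≠ s(a, b)) ∧
    (∀ x y : T.V, T.G.Adj x y → s(x, y) ≠ s(a, b) →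
      ((∃ i : Fin n, T.leaf i = x ∨ T.leaf i = y) →
        T'.w s(φ x, φ y) = T.w s(x, y) + T.w s(a, b) / k) ∧
      (¬ (∃ i : Fin n, T.leaf i = x ∨ T.leaf i = y) →
        T'.w s(φ x, φ y) = T.w s(x, y)))

/-- `T'` is obtained from `T` by a `k`-IO operation. -/
def IOStep (k : ℕ) (T T' : WTree n) : Prop := ∃ a b : T.V, IOStepOn k T T' a b

/-- `T'` is obtained from `T` by a `k`-OI operation (the inverse of a `k`-IO operation). -/
def OIStep (k : ℕ) (T T' : WTree n) : Prop := IOStep k T' T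

/-- `T'` is obtained from `T` by inserting an internal edge of weight `0`
(the inverse of contracting it). -/
def InsertZeroStep (T T' : WTree n) : Prop :=
  ∃ a b : T'.V, T'.G.Adj a b ∧ ¬ T'.IsTwigEdge s(a, b) ∧ T'.w s(a, b) = 0 ∧
    ∃ φ : T'.V → T.V,
      Function.Surjective φ ∧ φ a = φ b ∧
      (∀ x y : T'.V, φ x = φ y → x = y ∨ s(x, y) = s(a, b)) ∧
      (∀ i : Fin n, φ (T'.leaf i) = T.leaf i) ∧
      (∀ u v : T.V, T.G.Adj u v ↔
        ∃ x y : T'.V, φ x = u ∧ φ y = v ∧ T'.G.Adj x y ∧ s(x, y) ≠ s(a, b)) ∧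
      (∀ x y : T'.V, T'.G.Adj x y → s(x, y) ≠ s(a, b) → T.w s(φ x, φ y) = T'.w s(x, y))

/-- Replace the weight function of `T`. -/
def reweight (T : WTree n) (w' : Sym2 T.V → ℝ)
    (h : ∀ e, e ∉ T.G.edgeSet → w' e = 0) : WTree n :=
  { T with w := w', wSupport := h }

end WTree

namespace WTree
open TreeAux
open scoped Classical
variable {n : ℕ} (P : WTree n) [Fintype P.V] [DecidableEq P.V] [DecidableRel P.G.Adj]

lemma mem_pathEdges_iff {a b : P.V} {e : Sym2 P.V} :
    e ∈ P.pathEdges a b ↔ e ∈ (tp P.isTree a b).edges := by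
  constructor
  · rintro ⟨p, hp, he⟩
    rwa [TreeAux.eq_tp P.isTree hp] at he
  · intro he
    exact ⟨_, TreeAux.tp_isPath P.isTree a b, he⟩

/-- `dd a b` : total weight of the path from `a` to `b`. -/
noncomputable def dd (a b : P.V) : ℝ :=
  ∑ e ∈ P.G.edgeFinset, if e ∈ (tp P.isTree a b).edges then P.w e else 0

lemma dd_comm (a b : P.V) : dd P a b = dd P b a :=
  Finset.sum_congr rfl fun e _ => if_congr (TreeAux.mem_tp_comm P.isTree) rfl rfl

lemma D_eq_sum (I : Finset (Fin n)) :
    P.D I = ∑ e ∈ P.G.edgeFinset, if e ∈ P.subtreeEdges ↑I then P.w e else 0 := by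
  have hsub : P.subtreeEdges ↑I ⊆ P.G.edgeSet := by
    rintro e ⟨i, hi, j, hj, p, hp, he⟩
    exact p.edges_subset_edgeSet he
  have hset : P.subtreeEdges ↑I
      = ↑(P.G.edgeFinset.filter (fun e => e ∈ P.subtreeEdges ↑I)) := by
    ext e
    simp only [Finset.coe_filter, Set.mem_setOf_eq, SimpleGraph.mem_edgeFinset]
    exact ⟨fun h => ⟨hsub h, h⟩, fun h => h.2⟩
  unfold WTree.D
  conv_lhs => rw [hset, finsum_mem_coe_finset]
  rw [Finset.sum_filter]

lemma mem_subtree_triple (a b c : Fin n) {e : Sym2 P.V} :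
    e ∈ P.subtreeEdges ↑({a, b, c} : Finset (Fin n)) ↔
      e ∈ (tp P.isTree (P.leaf a) (P.leaf b)).edges ∨
      e ∈ (tp P.isTree (P.leaf a) (P.leaf c)).edges ∨
      e ∈ (tp P.isTree (P.leaf b) (P.leaf c)).edges := by
  constructor
  · rintro ⟨i, hi, j, hj, hp⟩
    rw [mem_pathEdges_iff] at hp
    simp only [Finset.coe_insert, Set.mem_insert_iff, Finset.coe_singleton,
      Set.mem_singleton_iff] at hi hj
    rcases hi with rfl | rfl | rfl <;> rcases hj with rfl | rfl | rfl <;>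
      first
        | (rw [TreeAux.tp_self] at hp; simp at hp)
        | tauto
        | (rw [TreeAux.mem_tp_comm P.isTree] at hp; tauto)
  · have hmem : ∀ x : Fin n, x ∈ ({a, b, c} : Finset (Fin n)) →
        (x : Fin n) ∈ (↑({a, b, c} : Finset (Fin n)) : Set (Fin n)) := fun x hx => hx
    rintro (h | h | h)
    · exact ⟨a, hmem a (by simp), b, hmem b (by simp), (mem_pathEdges_iff P).mpr h⟩
    · exact ⟨a, hmem a (by simp), c, hmem c (by simp), (mem_pathEdges_iff P).mpr h⟩
    · exact ⟨b, hmem b (by simp), c, hmem c (by simp), (mem_pathEdges_iff P).mpr h⟩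

lemma D_triple (a b c : Fin n) :
    2 * P.D {a, b, c} = dd P (P.leaf a) (P.leaf b) + dd P (P.leaf a) (P.leaf c)
      + dd P (P.leaf b) (P.leaf c) := by
  rw [D_eq_sum]
  unfold dd
  rw [Finset.mul_sum, ← Finset.sum_add_distrib, ← Finset.sum_add_distrib]
  refine Finset.sum_congr rfl fun e he => ?_
  have hab : (e ∈ (tp P.isTree (P.leaf a) (P.leaf b)).edges)
      ↔ Xor' (e ∈ (tp P.isTree (P.leaf a) (P.leaf c)).edges)
          (e ∈ (tp P.isTree (P.leaf b) (P.leaf c)).edges) := by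
    have hx := TreeAux.xor_tri P.isTree (P.leaf a) (P.leaf c) (P.leaf b) e
    have hcb : (e ∈ (tp P.isTree (P.leaf c) (P.leaf b)).edges)
        ↔ (e ∈ (tp P.isTree (P.leaf b) (P.leaf c)).edges) := TreeAux.mem_tp_comm P.isTree
    rw [hx, hcb]
  rw [show (e ∈ P.subtreeEdges ↑({a, b, c} : Finset (Fin n))) ↔ _ from mem_subtree_triple P a b c]
  by_cases h1 : e ∈ (tp P.isTree (P.leaf a) (P.leaf c)).edges <;>
    by_cases h2 : e ∈ (tp P.isTree (P.leaf b) (P.leaf c)).edges <;>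
    · simp [hab, Xor', h1, h2]
      try ring

/-- overlap sum at a vertex `x`. -/
noncomputable def ov (x a b : P.V) : ℝ :=
  ∑ e ∈ P.G.edgeFinset,
    if (e ∈ (tp P.isTree a x).edges ∧ e ∈ (tp P.isTree x b).edges) then P.w e else 0

lemma dd_ov (x a b : P.V) :
    dd P a b = dd P a x + dd P x b - 2 * ov P x a b := by
  unfold dd ov
  rw [Finset.mul_sum, ← Finset.sum_add_distrib, ← Finset.sum_sub_distrib]
  refine Finset.sum_congr rfl fun e he => ?_
  have hab : (e ∈ (tp P.isTree a b).edges)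
      ↔ Xor' (e ∈ (tp P.isTree a x).edges) (e ∈ (tp P.isTree x b).edges) :=
    TreeAux.xor_tri P.isTree a x b e
  by_cases h1 : e ∈ (tp P.isTree a x).edges <;>
    by_cases h2 : e ∈ (tp P.isTree x b).edges <;>
    · simp [hab, Xor', h1, h2]
      try ring

lemma ov_zero {a b : P.V} (x : P.V) (hx : x ∈ (tp P.isTree a b).support) :
    ov P x a b = 0 :=
  Finset.sum_eq_zero fun e _ => if_neg (TreeAux.tp_edges_split P.isTree hx).2

lemma dd_split {a b : P.V} (x : P.V) (hx : x ∈ (tp P.isTree a b).support) :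
    dd P a b = dd P a x + dd P x b := by
  rw [dd_ov P x a b, ov_zero P x hx]
  ring

lemma ov_ne {a b x : P.V} (h : ov P x a b ≠ 0) :
    a ≠ x ∧ b ≠ x ∧ TreeAux.sv P.isTree x a = TreeAux.sv P.isTree x b := by
  obtain ⟨e, he, hne⟩ := Finset.exists_ne_zero_of_sum_ne_zero h
  have hcond : e ∈ (tp P.isTree a x).edges ∧ e ∈ (tp P.isTree x b).edges := by
    by_contra hc
    rw [if_neg hc] at hne
    exact hne rfl
  exact TreeAux.shared_sv P.isTree ((TreeAux.mem_tp_comm P.isTree).mp hcond.1) hcond.2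

lemma B_decomp {a b c d x : P.V} (hab : x ∈ (tp P.isTree a b).support)
    (hcd : x ∈ (tp P.isTree c d).support) :
    dd P a b + dd P c d - dd P a c - dd P b d = 2 * ov P x a c + 2 * ov P x b d := by
  have h1 := dd_split P x hab
  have h2 := dd_split P x hcd
  have h3 := dd_ov P x a c
  have h4 := dd_ov P x b d
  have c1 := dd_comm P x b
  have c2 := dd_comm P x c
  have c3 := dd_comm P x d
  linarith

lemma cross_zero {a b c d x : P.V} (hab : x ∈ (tp P.isTree a b).support)
    (hcd : x ∈ (tp P.isTree c d).support)
    (h1 : ov P x a c ≠ 0 ∨ ov P x b d ≠ 0) (h2 : ov P x a d ≠ 0 ∨ ov P x b c ≠ 0) :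
    False := by
  have key : ∀ {u v : P.V}, ov P x u v ≠ 0 →
      TreeAux.sv P.isTree x u = TreeAux.sv P.isTree x v ∧ u ≠ x ∧ v ≠ x := by
    intro u v h
    obtain ⟨hu, hv, hs⟩ := ov_ne P h
    exact ⟨hs, hu, hv⟩
  rcases h1 with h1 | h1 <;> rcases h2 with h2 | h2
  · obtain ⟨e1, ha, hc⟩ := key h1
    obtain ⟨e2, -, hd⟩ := key h2
    exact (TreeAux.interior_two P.isTree hcd hc.symm hd.symm).1 (e1.symm.trans e2)
  · obtain ⟨e1, ha, hc⟩ := key h1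
    obtain ⟨e2, hb, -⟩ := key h2
    exact (TreeAux.interior_two P.isTree hab ha.symm hb.symm).1 (e1.trans e2.symm)
  · obtain ⟨e1, hb, hd⟩ := key h1
    obtain ⟨e2, ha, -⟩ := key h2
    exact (TreeAux.interior_two P.isTree hab ha.symm hb.symm).1 (e2.trans e1.symm)
  · obtain ⟨e1, hb, hd⟩ := key h1
    obtain ⟨e2, -, hc⟩ := key h2
    exact (TreeAux.interior_two P.isTree hcd hc.symm hd.symm).1 (e2.symm.trans e1)

/-- if the two paths meet, one of the two cross differences vanishes. -/
lemma meet_zero {a b c d x : P.V} (hab : x ∈ (tp P.isTree a b).support)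
    (hcd : x ∈ (tp P.isTree c d).support) :
    dd P a b + dd P c d - dd P a c - dd P b d = 0 ∨
    dd P a b + dd P c d - dd P a d - dd P b c = 0 := by
  by_contra hcon
  push_neg at hcon
  obtain ⟨hB1, hB2⟩ := hcon
  have hdc : x ∈ (tp P.isTree d c).support := (TreeAux.support_tp_comm P.isTree).mp hcd
  have e1 := B_decomp P hab hcd
  have e2 := B_decomp P hab hdc
  have cdc := dd_comm P c d
  have hbc := dd_comm P b c
  refine cross_zero P hab hcd ?_ ?_
  · by_contra hz
    push_neg at hz
    rw [hz.1, hz.2] at e1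
    exact hB1 (by linarith)
  · -- from e2 : dd ab + dd dc - dd a d - dd b c = 2 ov x a d + 2 ov x b c
    by_contra hz
    push_neg at hz
    rw [hz.1, hz.2] at e2
    exact hB2 (by linarith)

lemma D_comb (a b c d x : Fin n) :
    2 * (P.D {a, b, x} + P.D {c, d, x}) - 2 * (P.D {a, d, x} + P.D {c, b, x})
      = dd P (P.leaf a) (P.leaf b) + dd P (P.leaf c) (P.leaf d)
        - dd P (P.leaf a) (P.leaf d) - dd P (P.leaf c) (P.leaf b) := by
  have h1 := D_triple P a b x
  have h2 := D_triple P c d x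
  have h3 := D_triple P a d x
  have h4 := D_triple P c b x
  linarith

end WTree
namespace WTree
open TreeAux
open scoped Classical
variable {n : ℕ} (P : WTree n) [Fintype P.V] [DecidableEq P.V] [DecidableRel P.G.Adj]

lemma buneman_iff (i j l m : Fin n) :
    P.Buneman i j l m ↔ ∀ v ∈ (tp P.isTree (P.leaf i) (P.leaf j)).support,
      v ∉ (tp P.isTree (P.leaf l) (P.leaf m)).support := by
  constructor
  · intro h v hv
    exact h _ _ (tp_isPath P.isTree _ _) (tp_isPath P.isTree _ _) v hv
  · intro h p q hp hq v hv
    rw [eq_tp P.isTree hp] at hv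
    rw [eq_tp P.isTree hq]
    exact h v hv

lemma not_twig {e : Sym2 P.V} {i j l m : Fin n}
    (hij : i ≠ j) (hlm : l ≠ m)
    (ha : e ∉ (tp P.isTree (P.leaf i) (P.leaf j)).edges)
    (hb : e ∉ (tp P.isTree (P.leaf l) (P.leaf m)).edges)
    (ht : e ∈ (tp P.isTree (P.leaf i) (P.leaf l)).edges) :
    ¬ P.IsTwigEdge e := by
  rintro ⟨t, v, hnode, pt, hptpath, hnonodes, hmem⟩
  have hpt : pt = tp P.isTree (P.leaf t) v := eq_tp P.isTree hptpath
  have hdeg : ∀ u : Fin n, (P.G.neighborSet (P.leaf u)).ncard = 1 :=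
    fun u => (P.leafSpec (P.leaf u)).mpr ⟨u, rfl⟩
  have hvleaf : ∀ u : Fin n, v ≠ P.leaf u := by
    intro u hv
    have h1 := hdeg u
    rw [← hv] at h1
    have := hnode
    unfold WTree.IsNode WTree.deg at this
    omega
  -- main claim : a twig edge separates its leaf from all other leaves
  have key : ∀ u : Fin n, u ≠ t → e ∈ (tp P.isTree (P.leaf t) (P.leaf u)).edges := by
    intro u hut
    have hlu : P.leaf u ≠ P.leaf t := fun h => hut (P.leafInj h)
    obtain ⟨m', wa, wb, wc, e1, e2, e3, p1, p2, p3⟩ :=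
      median P.isTree (P.leaf t) (P.leaf u) v
    -- first show m' = v
    have hm'v : m' = v := by
      by_contra hmv
      by_cases hmt : m' = P.leaf t
      · -- two distinct neighbours of a degree-one leaf
        have hmlu : m' ≠ P.leaf u := by rw [hmt]; exact Ne.symm hlu
        have hne := sv_ne P.isTree p3 hmlu hmv
        have a1 := sv_adj P.isTree (Ne.symm hmlu)
        have a2 := sv_adj P.isTree (Ne.symm hmv)
        have h2 := two_le_ncard hne a1 a2
        have h1 := hdeg t
        rw [← hmt] at h1
        omega
      · by_cases hmu : m' = P.leaf u
        · have hmlt : m' ≠ P.leaf t := by rw [hmu]; exact hlu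
          have hne := sv_ne P.isTree p2 hmlt hmv
          have a1 := sv_adj P.isTree (Ne.symm hmlt)
          have a2 := sv_adj P.isTree (Ne.symm hmv)
          have h2 := two_le_ncard hne a1 a2
          have h1 := hdeg u
          rw [← hmu] at h1
          omega
        · -- m' is a node strictly inside the twig: contradiction
          have h3 := median_three P.isTree p1 p2 p3 hmt hmu hmv
          obtain ⟨d12, d13, d23, a1, a2, a3⟩ := h3
          have hnode' : P.IsNode m' := by
            unfold WTree.IsNode WTree.deg
            exact three_le_ncard P.isTree d12 d13 d23 a1 a2 a3
          have hm'mem : m' ∈ pt.support := by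
            rw [hpt, e2, Walk.mem_support_append_iff]
            left
            rw [Walk.support_reverse, List.mem_reverse]
            exact Walk.start_mem_support wa
          exact hmv (hnonodes m' hm'mem hnode')
    -- with m' = v the twig is an initial segment of the path to u
    subst hm'v
    have hwc : wc = Walk.nil := by
      have h5 := p2.of_append_right
      rwa [Walk.isPath_iff_eq_nil] at h5
    have hpt2 : tp P.isTree (P.leaf t) m' = wa.reverse := by
      rw [e2, hwc, Walk.append_nil]
    have he_wa : e ∈ wa.reverse.edges := by
      rw [← hpt2, ← hpt]
      exact hmem
    rw [e1, Walk.edges_append, List.mem_append]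
    exact Or.inl he_wa
  -- now use the three base facts
  by_cases hti : t = i
  · subst hti
    exact ha (key j (Ne.symm hij))
  · by_cases htj : t = j
    · subst htj
      exact ha ((mem_tp_comm P.isTree).mp (key i (Ne.symm hti)))
    · by_cases htl : t = l
      · subst htl
        exact hb (key m (Ne.symm hlm))
      · by_cases htm : t = m
        · subst htm
          exact hb ((mem_tp_comm P.isTree).mp (key l (Ne.symm htl)))
        · have h1 := key i (Ne.symm hti)
          have h2 := key l (Ne.symm htl)
          have hx := xor_tri P.isTree (P.leaf i) (P.leaf t) (P.leaf l) e
          rw [hx] at ht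
          rcases ht with ⟨-, h4⟩ | ⟨-, h4⟩
          · exact h4 h2
          · exact h4 ((mem_tp_comm P.isTree).mp h1)

end WTree

namespace WTree
open TreeAux
open scoped Classical
variable {n : ℕ}

lemma four_distinct {i j l m : Fin n} (h : ({i, j, l, m} : Finset (Fin n)).card = 4) :
    i ≠ j ∧ i ≠ l ∧ i ≠ m ∧ j ≠ l ∧ j ≠ m ∧ l ≠ m := by
  have key : ∀ (a b c : Fin n), ({a, b, c} : Finset (Fin n)).card ≤ 3 := by
    intro a b c
    refine le_trans (Finset.card_insert_le _ _) ?_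
    have h1 := Finset.card_insert_le b ({c} : Finset (Fin n))
    have h2 : ({c} : Finset (Fin n)).card = 1 := Finset.card_singleton c
    omega
  refine ⟨?_, ?_, ?_, ?_, ?_, ?_⟩ <;> rintro rfl
  · have hs : ({i, i, l, m} : Finset (Fin n)) ⊆ {i, l, m} := by
      intro x hx; simp at hx ⊢; tauto
    have := Finset.card_le_card hs; have := key i l m; omega
  · have hs : ({i, j, i, m} : Finset (Fin n)) ⊆ {i, j, m} := by
      intro x hx; simp at hx ⊢; tauto
    have := Finset.card_le_card hs; have := key i j m; omega
  · have hs : ({i, j, l, i} : Finset (Fin n)) ⊆ {i, j, l} := by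
      intro x hx; simp at hx ⊢; tauto
    have := Finset.card_le_card hs; have := key i j l; omega
  · have hs : ({i, j, j, m} : Finset (Fin n)) ⊆ {i, j, m} := by
      intro x hx; simp at hx ⊢; tauto
    have := Finset.card_le_card hs; have := key i j m; omega
  · have hs : ({i, j, l, j} : Finset (Fin n)) ⊆ {i, j, l} := by
      intro x hx; simp at hx ⊢; tauto
    have := Finset.card_le_card hs; have := key i j l; omega
  · have hs : ({i, j, l, l} : Finset (Fin n)) ⊆ {i, j, l} := by
      intro x hx; simp at hx ⊢; tauto
    have := Finset.card_le_card hs; have := key i j l; omega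

end WTree

/-- let `n ≥ 5` and `P` be an essential internal-nonzero-weighted tree with
leaf set `[n]`. For distinct leaves `i,j,l,m`, the Buneman index `⟨i,j | l,m⟩` holds iff
(a) there is `r ∈ [n] - {i,j,l,m}` satisfying the inequality
`D_{i,j,l} + D_{m,r,l} ≠ D_{i,r,l} + D_{m,j,l}` together with the ones obtained by
swapping `i` with `j` and/or `l` with `m`, or (b) for every `r ∈ [n] - {i,j,l,m}` both
`D_{i,j,r} + D_{m,l,r} ≠ D_{i,m,r} + D_{j,l,r}` and
`D_{i,j,r} + D_{m,l,r} ≠ D_{i,l,r} + D_{j,m,r}` hold. -/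
theorem statement8 (n : ℕ) (hn : 5 ≤ n)
    (P : WTree n) (hess : P.Essential) (hinz : P.InternalNonzero)
    (i j l m : Fin n) (hcard : ({i, j, l, m} : Finset (Fin n)).card = 4) :
    P.Buneman i j l m ↔
      ((∃ r : Fin n, r ∉ ({i, j, l, m} : Finset (Fin n)) ∧
          P.D {i, j, l} + P.D {m, r, l} ≠ P.D {i, r, l} + P.D {m, j, l} ∧
          P.D {j, i, l} + P.D {m, r, l} ≠ P.D {j, r, l} + P.D {m, i, l} ∧
          P.D {i, j, m} + P.D {l, r, m} ≠ P.D {i, r, m} + P.D {l, j, m} ∧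
          P.D {j, i, m} + P.D {l, r, m} ≠ P.D {j, r, m} + P.D {l, i, m}) ∨
       (∀ r : Fin n, r ∉ ({i, j, l, m} : Finset (Fin n)) →
          P.D {i, j, r} + P.D {m, l, r} ≠ P.D {i, m, r} + P.D {j, l, r} ∧
          P.D {i, j, r} + P.D {m, l, r} ≠ P.D {i, l, r} + P.D {j, m, r})) := by
  letI : Fintype P.V := P.fintypeV
  letI : DecidableEq P.V := Classical.decEq _
  letI : DecidableRel P.G.Adj := Classical.decRel _
  obtain ⟨hij, hil, him, hjl, hjm, hlm⟩ := WTree.four_distinct hcard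
  have hG := P.isTree
  constructor
  · -- forward direction
    intro hbun
    have hdisj : ∀ v ∈ (TreeAux.tp P.isTree  (P.leaf i) (P.leaf j)).support, v ∉ (TreeAux.tp P.isTree  (P.leaf l) (P.leaf m)).support :=
      (WTree.buneman_iff P i j l m).mp hbun
    have hC1 : ∀ e : Sym2 P.V, ¬ (e ∈ (TreeAux.tp P.isTree  (P.leaf i) (P.leaf j)).edges ∧ e ∈ (TreeAux.tp P.isTree  (P.leaf l) (P.leaf m)).edges) := by
      rintro e ⟨h1, h2⟩
      induction e with
      | h u1 u2 =>
        exact hdisj u1 (SimpleGraph.Walk.fst_mem_support_of_mem_edges _ h1)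
          (SimpleGraph.Walk.fst_mem_support_of_mem_edges _ h2)
    by_cases hs : (∑ e ∈ P.G.edgeFinset,
        if (e ∉ (TreeAux.tp P.isTree  (P.leaf i) (P.leaf j)).edges ∧ e ∉ (TreeAux.tp P.isTree  (P.leaf l) (P.leaf m)).edges ∧ e ∈ (TreeAux.tp P.isTree  (P.leaf i) (P.leaf l)).edges)
          then P.w e else 0) = 0
    · -- zero bridge weight : use option (a)
      left
      have hstart_p : (P.leaf i) ∈ (TreeAux.tp P.isTree (P.leaf i) (P.leaf j)).support := SimpleGraph.Walk.start_mem_support _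
      have hll_np : (P.leaf l) ∉ (TreeAux.tp P.isTree (P.leaf i) (P.leaf j)).support :=
        fun h => hdisj _ h (SimpleGraph.Walk.start_mem_support _)
      obtain ⟨u0, x0, hu0, hx0, he0⟩ := TreeAux.frontier (TreeAux.tp P.isTree (P.leaf i) (P.leaf l))
        {v | v ∈ (TreeAux.tp P.isTree (P.leaf i) (P.leaf j)).support} hstart_p hll_np
      have he0EF : s(u0, x0) ∈ P.G.edgeFinset :=
        SimpleGraph.mem_edgeFinset.mpr ((TreeAux.tp P.isTree (P.leaf i) (P.leaf l)).edges_subset_edgeSet he0)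
      have he0a : s(u0, x0) ∉ (TreeAux.tp P.isTree (P.leaf i) (P.leaf j)).edges :=
        fun hmem => hx0 (SimpleGraph.Walk.snd_mem_support_of_mem_edges _ hmem)
      have he0b : s(u0, x0) ∉ (TreeAux.tp P.isTree (P.leaf l) (P.leaf m)).edges :=
        fun hmem => hdisj u0 hu0 (SimpleGraph.Walk.fst_mem_support_of_mem_edges _ hmem)
      have he0SEP : s(u0, x0) ∈ (P.G.edgeFinset.filter (fun e => e ∉ (TreeAux.tp P.isTree (P.leaf i) (P.leaf j)).edges ∧ e ∉ (TreeAux.tp P.isTree (P.leaf l) (P.leaf m)).edges ∧ e ∈ (TreeAux.tp P.isTree (P.leaf i) (P.leaf l)).edges)) :=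
        Finset.mem_filter.mpr ⟨he0EF, he0a, he0b, he0⟩
      obtain ⟨e₁, he₁SEP, cc, hcc, he₁c, huniq⟩ := TreeAux.firstHit P.isTree (TreeAux.tp P.isTree (P.leaf i) (P.leaf l))
        (TreeAux.tp_isPath P.isTree _ _) (P.G.edgeFinset.filter (fun e => e ∉ (TreeAux.tp P.isTree (P.leaf i) (P.leaf j)).edges ∧ e ∉ (TreeAux.tp P.isTree (P.leaf l) (P.leaf m)).edges ∧ e ∈ (TreeAux.tp P.isTree (P.leaf i) (P.leaf l)).edges))
        (fun e he => (Finset.mem_filter.mp he).2.2.2) ⟨_, he0SEP⟩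
      obtain ⟨he₁EF, he₁a, he₁b, he₁t⟩ := Finset.mem_filter.mp he₁SEP
      have hw1 : P.w e₁ ≠ 0 := by
        apply hinz e₁ (SimpleGraph.mem_edgeFinset.mp he₁EF)
        exact WTree.not_twig P hij hlm he₁a he₁b he₁t
      have hssum : ∑ e ∈ (P.G.edgeFinset.filter (fun e => e ∉ (TreeAux.tp P.isTree (P.leaf i) (P.leaf j)).edges ∧ e ∉ (TreeAux.tp P.isTree (P.leaf l) (P.leaf m)).edges ∧ e ∈ (TreeAux.tp P.isTree (P.leaf i) (P.leaf l)).edges)), P.w e = 0 := by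
        rw [Finset.sum_filter]
        exact hs
      have hfilter1 : (P.G.edgeFinset.filter (fun e => e ∉ (TreeAux.tp P.isTree (P.leaf i) (P.leaf j)).edges ∧ e ∉ (TreeAux.tp P.isTree (P.leaf l) (P.leaf m)).edges ∧ e ∈ (TreeAux.tp P.isTree (P.leaf i) (P.leaf l)).edges)).filter (fun e => e ∈ (TreeAux.tp P.isTree (P.leaf i) cc).edges) = {e₁} := by
        rw [Finset.eq_singleton_iff_unique_mem]
        constructor
        · exact Finset.mem_filter.mpr ⟨he₁SEP, he₁c⟩
        · intro e he
          exact huniq e (Finset.mem_filter.mp he).1 (Finset.mem_filter.mp he).2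
      have hsplit := Finset.sum_filter_add_sum_filter_not (P.G.edgeFinset.filter (fun e => e ∉ (TreeAux.tp P.isTree (P.leaf i) (P.leaf j)).edges ∧ e ∉ (TreeAux.tp P.isTree (P.leaf l) (P.leaf m)).edges ∧ e ∈ (TreeAux.tp P.isTree (P.leaf i) (P.leaf l)).edges))
        (fun e => e ∈ (TreeAux.tp P.isTree (P.leaf i) cc).edges) P.w
      have hsum1 : ∑ e ∈ (P.G.edgeFinset.filter (fun e => e ∉ (TreeAux.tp P.isTree (P.leaf i) (P.leaf j)).edges ∧ e ∉ (TreeAux.tp P.isTree (P.leaf l) (P.leaf m)).edges ∧ e ∈ (TreeAux.tp P.isTree (P.leaf i) (P.leaf l)).edges)).filter (fun e => e ∈ (TreeAux.tp P.isTree (P.leaf i) cc).edges), P.w e = P.w e₁ := by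
        rw [hfilter1, Finset.sum_singleton]
      have hS2sum : ∑ e ∈ (P.G.edgeFinset.filter (fun e => e ∉ (TreeAux.tp P.isTree (P.leaf i) (P.leaf j)).edges ∧ e ∉ (TreeAux.tp P.isTree (P.leaf l) (P.leaf m)).edges ∧ e ∈ (TreeAux.tp P.isTree (P.leaf i) (P.leaf l)).edges)).filter (fun e => ¬ e ∈ (TreeAux.tp P.isTree (P.leaf i) cc).edges), P.w e = - P.w e₁ := by
        rw [hsum1, hssum] at hsplit
        linarith
      obtain ⟨e₂, he₂mem⟩ : ((P.G.edgeFinset.filter (fun e => e ∉ (TreeAux.tp P.isTree (P.leaf i) (P.leaf j)).edges ∧ e ∉ (TreeAux.tp P.isTree (P.leaf l) (P.leaf m)).edges ∧ e ∈ (TreeAux.tp P.isTree (P.leaf i) (P.leaf l)).edges)).filter (fun e => ¬ e ∈ (TreeAux.tp P.isTree (P.leaf i) cc).edges)).Nonempty := by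
        by_contra hemp
        rw [Finset.not_nonempty_iff_eq_empty] at hemp
        rw [hemp, Finset.sum_empty] at hS2sum
        exact hw1 (by linarith)
      obtain ⟨he₂SEP, he₂nc⟩ := Finset.mem_filter.mp he₂mem
      obtain ⟨he₂EF, he₂a, he₂b, he₂t⟩ := Finset.mem_filter.mp he₂SEP
      have he₂cll : e₂ ∈ (TreeAux.tp P.isTree cc (P.leaf l)).edges := by
        rcases (TreeAux.tp_edges_split P.isTree hcc).1.mp he₂t with h | h
        · exact absurd h he₂nc
        · exact h
      have hcp : cc ∉ (TreeAux.tp P.isTree (P.leaf i) (P.leaf j)).support := by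
        intro hmem
        apply he₁a
        have hsub : (TreeAux.tp P.isTree (P.leaf i) cc).edges ⊆ (TreeAux.tp P.isTree (P.leaf i) (P.leaf j)).edges := by
          rw [TreeAux.tp_take P.isTree hmem]
          exact SimpleGraph.Walk.edges_takeUntil_subset _ hmem
        exact hsub he₁c
      have hcq : cc ∉ (TreeAux.tp P.isTree (P.leaf l) (P.leaf m)).support := by
        intro hmem
        apply he₂b
        have hsub : (TreeAux.tp P.isTree (P.leaf l) cc).edges ⊆ (TreeAux.tp P.isTree (P.leaf l) (P.leaf m)).edges := by
          rw [TreeAux.tp_take P.isTree hmem]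
          exact SimpleGraph.Walk.edges_takeUntil_subset _ hmem
        exact hsub ((TreeAux.mem_tp_comm P.isTree).mp he₂cll)
      have hcli : cc ≠ (P.leaf i) := by
        intro h
        rw [h] at hcp
        exact hcp hstart_p
      have hcll2 : cc ≠ (P.leaf l) := by
        intro h
        rw [h] at hcq
        exact hcq (SimpleGraph.Walk.start_mem_support _)
      obtain ⟨hpn, hadjp, hadjn⟩ := TreeAux.interior_two P.isTree hcc hcli hcll2
      have hdeg3 : 2 < (P.G.neighborSet cc).ncard := by
        have h2 := TreeAux.two_le_ncard (G := P.G) hpn hadjp hadjn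
        have h3 := hess cc
        unfold WTree.deg at h3
        omega
      obtain ⟨z, hzadj, hzp, hzn⟩ :
          ∃ z, P.G.Adj cc z ∧ z ≠ TreeAux.sv P.isTree cc (P.leaf i) ∧ z ≠ TreeAux.sv P.isTree cc (P.leaf l) := by
        by_contra hcon
        push_neg at hcon
        have hsub : P.G.neighborSet cc ⊆ {TreeAux.sv P.isTree cc (P.leaf i), TreeAux.sv P.isTree cc (P.leaf l)} := by
          intro y hy
          rw [Set.mem_insert_iff, Set.mem_singleton_iff]
          by_cases h1 : y = TreeAux.sv P.isTree cc (P.leaf i)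
          · exact Or.inl h1
          · exact Or.inr (hcon y hy h1)
        have hpair : ({TreeAux.sv P.isTree cc (P.leaf i), TreeAux.sv P.isTree cc (P.leaf l)} : Set P.V).ncard ≤ 2 := by
          have h5 := Set.ncard_insert_le (TreeAux.sv P.isTree cc (P.leaf i))
            ({TreeAux.sv P.isTree cc (P.leaf l)} : Set P.V)
          have h6 : ({TreeAux.sv P.isTree cc (P.leaf l)} : Set P.V).ncard = 1 := Set.ncard_singleton _
          omega
        have hle := Set.ncard_le_ncard hsub (Set.toFinite _)
        omega
      obtain ⟨tv, htdeg, hctv⟩ := TreeAux.exists_far P.isTree hzadj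
      obtain ⟨r, hrleaf⟩ := (P.leafSpec tv).mp htdeg
      rw [← hrleaf] at hctv
      have hbranch : ∀ y ∈ (TreeAux.tp P.isTree z (P.leaf r)).support, TreeAux.sv P.isTree cc y = z ∧ y ≠ cc := by
        intro y hy
        have hczy : cc ∉ (TreeAux.tp P.isTree z y).support := by
          rw [TreeAux.tp_take P.isTree hy]
          intro hm
          exact hctv (SimpleGraph.Walk.support_takeUntil_subset _ hy hm)
        have hcons : TreeAux.tp P.isTree cc y = SimpleGraph.Walk.cons hzadj (TreeAux.tp P.isTree z y) :=
          (TreeAux.eq_tp P.isTree ((TreeAux.tp_isPath P.isTree _ _).cons hczy)).symm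
        constructor
        · unfold TreeAux.sv
          rw [hcons, SimpleGraph.Walk.getVert_cons_succ, SimpleGraph.Walk.getVert_zero]
        · intro h
          rw [h] at hy
          exact hctv hy
      have hsecp : ∀ y ∈ (TreeAux.tp P.isTree (P.leaf i) (P.leaf j)).support, TreeAux.sv P.isTree cc y = TreeAux.sv P.isTree cc (P.leaf i) :=
        fun y hy => TreeAux.sector P.isTree hy hcp
      have hsecq : ∀ y ∈ (TreeAux.tp P.isTree (P.leaf l) (P.leaf m)).support, TreeAux.sv P.isTree cc y = TreeAux.sv P.isTree cc (P.leaf l) :=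
        fun y hy => TreeAux.sector P.isTree hy hcq
      have hseg1 : ∀ y ∈ (TreeAux.tp P.isTree (P.leaf i) cc).support, y ≠ cc →
          TreeAux.sv P.isTree cc y = TreeAux.sv P.isTree cc (P.leaf i) :=
        fun y hy hyne =>
          TreeAux.sv_eq_of_mem P.isTree ((TreeAux.support_tp_comm P.isTree).mp hy) hyne
      have hseg2 : ∀ y ∈ (TreeAux.tp P.isTree cc (P.leaf l)).support, y ≠ cc →
          TreeAux.sv P.isTree cc y = TreeAux.sv P.isTree cc (P.leaf l) :=
        fun y hy hyne => TreeAux.sv_eq_of_mem P.isTree hy hyne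
      have hsvr : TreeAux.sv P.isTree cc (P.leaf r) = z :=
        (hbranch (P.leaf r) (SimpleGraph.Walk.end_mem_support _)).1
      have hrout : r ∉ ({i, j, l, m} : Finset (Fin n)) := by
        simp only [Finset.mem_insert, Finset.mem_singleton]
        push_neg
        refine ⟨?_, ?_, ?_, ?_⟩
        · rintro rfl
          exact hzp hsvr.symm
        · rintro rfl
          exact hzp (hsvr.symm.trans (hsecp (P.leaf r) (SimpleGraph.Walk.end_mem_support _)))
        · rintro rfl
          exact hzn hsvr.symm
        · rintro rfl
          exact hzn (hsvr.symm.trans (hsecq (P.leaf r) (SimpleGraph.Walk.end_mem_support _)))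
      have hconsr : TreeAux.tp P.isTree cc (P.leaf r) = SimpleGraph.Walk.cons hzadj (TreeAux.tp P.isTree z (P.leaf r)) :=
        (TreeAux.eq_tp P.isTree ((TreeAux.tp_isPath P.isTree _ _).cons hctv)).symm
      have hC2 : ∀ e : Sym2 P.V, e ∈ (TreeAux.tp P.isTree cc (P.leaf r)).edges →
          e ∉ (TreeAux.tp P.isTree (P.leaf i) (P.leaf j)).edges ∧ e ∉ (TreeAux.tp P.isTree (P.leaf l) (P.leaf m)).edges ∧ e ∉ (TreeAux.tp P.isTree (P.leaf i) (P.leaf l)).edges := by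
        intro e her
        have hbr : ∀ y, y ∈ (TreeAux.tp P.isTree cc (P.leaf r)).support → y ≠ cc → TreeAux.sv P.isTree cc y = z := by
          intro y hy hyne
          rw [hconsr, SimpleGraph.Walk.support_cons, List.mem_cons] at hy
          rcases hy with h | h
          · exact absurd h hyne
          · exact (hbranch y h).1
        refine ⟨?_, ?_, ?_⟩
        · intro hmem
          obtain ⟨y, hy1, hy2, hy3⟩ := TreeAux.edge_endpoint_ne (G := P.G) cc her hmem
          exact hzp ((hbr y hy2 hy1).symm.trans (hsecp y hy3))
        · intro hmem
          obtain ⟨y, hy1, hy2, hy3⟩ := TreeAux.edge_endpoint_ne (G := P.G) cc her hmem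
          exact hzn ((hbr y hy2 hy1).symm.trans (hsecq y hy3))
        · intro hmem
          obtain ⟨y, hy1, hy2, hy3⟩ := TreeAux.edge_endpoint_ne (G := P.G) cc her hmem
          rcases (TreeAux.tp_support_split P.isTree hcc).mp hy3 with h | h
          · exact hzp ((hbr y hy2 hy1).symm.trans (hseg1 y h hy1))
          · exact hzn ((hbr y hy2 hy1).symm.trans (hseg2 y h hy1))
      have hC3 : ∀ e : Sym2 P.V, e ∈ (TreeAux.tp P.isTree (P.leaf i) cc).edges → e ∈ (TreeAux.tp P.isTree (P.leaf i) (P.leaf l)).edges :=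
        fun e he => (TreeAux.tp_edges_split P.isTree hcc).1.mpr (Or.inl he)
      have hC4 : ∀ e : Sym2 P.V, e ∈ (TreeAux.tp P.isTree (P.leaf i) (P.leaf j)).edges → e ∈ (TreeAux.tp P.isTree (P.leaf i) (P.leaf l)).edges →
          e ∈ (TreeAux.tp P.isTree (P.leaf i) cc).edges := by
        intro e hea het
        rcases (TreeAux.tp_edges_split P.isTree hcc).1.mp het with h | h
        · exact h
        · exfalso
          obtain ⟨y, hy1, hy2, hy3⟩ := TreeAux.edge_endpoint_ne (G := P.G) cc h hea
          exact hpn ((hsecp y hy3).symm.trans (hseg2 y hy2 hy1))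
      have hC5 : ∀ e : Sym2 P.V, e ∈ (TreeAux.tp P.isTree (P.leaf l) (P.leaf m)).edges → e ∈ (TreeAux.tp P.isTree (P.leaf i) cc).edges → False := by
        intro e heb hep
        obtain ⟨y, hy1, hy2, hy3⟩ := TreeAux.edge_endpoint_ne (G := P.G) cc hep heb
        exact hpn ((hseg1 y hy2 hy1).symm.trans (hsecq y hy3))
      have hsum_single : (∑ e ∈ P.G.edgeFinset,
          if ((e ∉ (TreeAux.tp P.isTree (P.leaf i) (P.leaf j)).edges ∧ e ∉ (TreeAux.tp P.isTree (P.leaf l) (P.leaf m)).edges ∧ e ∈ (TreeAux.tp P.isTree (P.leaf i) (P.leaf l)).edges) ∧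
              e ∈ (TreeAux.tp P.isTree (P.leaf i) cc).edges) then P.w e else 0) = P.w e₁ := by
        have hpoint : ∀ e ∈ P.G.edgeFinset,
            (if ((e ∉ (TreeAux.tp P.isTree (P.leaf i) (P.leaf j)).edges ∧ e ∉ (TreeAux.tp P.isTree (P.leaf l) (P.leaf m)).edges ∧ e ∈ (TreeAux.tp P.isTree (P.leaf i) (P.leaf l)).edges) ∧
                e ∈ (TreeAux.tp P.isTree (P.leaf i) cc).edges) then P.w e else 0) = (if e = e₁ then P.w e else 0) := by
          intro e he
          refine if_congr ?_ rfl rfl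
          constructor
          · rintro ⟨⟨h1, h2, h3⟩, h4⟩
            exact huniq e (Finset.mem_filter.mpr ⟨he, h1, h2, h3⟩) h4
          · rintro rfl
            exact ⟨⟨he₁a, he₁b, he₁t⟩, he₁c⟩
        rw [Finset.sum_congr rfl hpoint, Finset.sum_ite_eq' P.G.edgeFinset e₁ P.w,
          if_pos he₁EF]
      have hA1id : WTree.dd P (P.leaf i) (P.leaf j) + WTree.dd P (P.leaf m) (P.leaf r) - WTree.dd P (P.leaf i) (P.leaf r) - WTree.dd P (P.leaf m) (P.leaf j)
          = -2 * (∑ e ∈ P.G.edgeFinset,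
            if ((e ∉ (TreeAux.tp P.isTree (P.leaf i) (P.leaf j)).edges ∧ e ∉ (TreeAux.tp P.isTree (P.leaf l) (P.leaf m)).edges ∧ e ∈ (TreeAux.tp P.isTree (P.leaf i) (P.leaf l)).edges) ∧ e ∈ (TreeAux.tp P.isTree (P.leaf i) cc).edges)
              then P.w e else 0) := by
        unfold WTree.dd
        rw [Finset.mul_sum, ← Finset.sum_add_distrib, ← Finset.sum_sub_distrib,
          ← Finset.sum_sub_distrib]
        refine Finset.sum_congr rfl fun e he => ?_
        have c1 := hC1 e
        have c3 := hC3 e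
        have c4 := hC4 e
        have c5 := hC5 e
        have mir : (e ∈ (TreeAux.tp P.isTree (P.leaf i) (P.leaf r)).edges) ↔ Xor' (e ∈ (TreeAux.tp P.isTree (P.leaf i) cc).edges) (e ∈ (TreeAux.tp P.isTree cc (P.leaf r)).edges) := TreeAux.xor_tri P.isTree (P.leaf i) cc (P.leaf r) e
        have mmc : (e ∈ (TreeAux.tp P.isTree (P.leaf m) cc).edges) ↔ Xor' (e ∈ (TreeAux.tp P.isTree (P.leaf m) (P.leaf i)).edges) (e ∈ (TreeAux.tp P.isTree (P.leaf i) cc).edges) := TreeAux.xor_tri P.isTree (P.leaf m) (P.leaf i) cc e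
        have mmi : (e ∈ (TreeAux.tp P.isTree (P.leaf m) (P.leaf i)).edges) ↔ Xor' (e ∈ (TreeAux.tp P.isTree (P.leaf m) (P.leaf l)).edges) (e ∈ (TreeAux.tp P.isTree (P.leaf l) (P.leaf i)).edges) := TreeAux.xor_tri P.isTree (P.leaf m) (P.leaf l) (P.leaf i) e
        have mml : (e ∈ (TreeAux.tp P.isTree (P.leaf m) (P.leaf l)).edges) ↔ (e ∈ (TreeAux.tp P.isTree (P.leaf l) (P.leaf m)).edges) := TreeAux.mem_tp_comm P.isTree
        have mlli : (e ∈ (TreeAux.tp P.isTree (P.leaf l) (P.leaf i)).edges) ↔ (e ∈ (TreeAux.tp P.isTree (P.leaf i) (P.leaf l)).edges) := TreeAux.mem_tp_comm P.isTree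
        have mmr : (e ∈ (TreeAux.tp P.isTree (P.leaf m) (P.leaf r)).edges) ↔ Xor' (e ∈ (TreeAux.tp P.isTree (P.leaf m) cc).edges) (e ∈ (TreeAux.tp P.isTree cc (P.leaf r)).edges) := TreeAux.xor_tri P.isTree (P.leaf m) cc (P.leaf r) e
        have mmj : (e ∈ (TreeAux.tp P.isTree (P.leaf m) (P.leaf j)).edges) ↔ Xor' (e ∈ (TreeAux.tp P.isTree (P.leaf m) (P.leaf i)).edges) (e ∈ (TreeAux.tp P.isTree (P.leaf i) (P.leaf j)).edges) := TreeAux.xor_tri P.isTree (P.leaf m) (P.leaf i) (P.leaf j) e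
        by_cases hr5 : e ∈ (TreeAux.tp P.isTree cc (P.leaf r)).edges
        · obtain ⟨n1, n2, n3⟩ := hC2 e hr5
          have n4 : e ∉ (TreeAux.tp P.isTree (P.leaf i) cc).edges := fun h => n3 (c3 h)
          simp [mir, mmc, mmi, mml, mlli, mmr, mmj, Xor', hr5, n1, n2, n3, n4]
          try ring
        · by_cases ha : e ∈ (TreeAux.tp P.isTree (P.leaf i) (P.leaf j)).edges
          · by_cases hb : e ∈ (TreeAux.tp P.isTree (P.leaf l) (P.leaf m)).edges
            · exact absurd ⟨ha, hb⟩ c1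
            · by_cases ht : e ∈ (TreeAux.tp P.isTree (P.leaf i) (P.leaf l)).edges
              · have hp4 : e ∈ (TreeAux.tp P.isTree (P.leaf i) cc).edges := c4 ha ht
                simp [mir, mmc, mmi, mml, mlli, mmr, mmj, Xor', hr5, ha, hb, ht, hp4]
                try ring
              · have hp4 : e ∉ (TreeAux.tp P.isTree (P.leaf i) cc).edges := fun h => ht (c3 h)
                simp [mir, mmc, mmi, mml, mlli, mmr, mmj, Xor', hr5, ha, hb, ht, hp4]
                try ring
          · by_cases hb : e ∈ (TreeAux.tp P.isTree (P.leaf l) (P.leaf m)).edges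
            · by_cases ht : e ∈ (TreeAux.tp P.isTree (P.leaf i) (P.leaf l)).edges
              · have hp4 : e ∉ (TreeAux.tp P.isTree (P.leaf i) cc).edges := fun h => c5 hb h
                simp [mir, mmc, mmi, mml, mlli, mmr, mmj, Xor', hr5, ha, hb, ht, hp4]
                try ring
              · have hp4 : e ∉ (TreeAux.tp P.isTree (P.leaf i) cc).edges := fun h => ht (c3 h)
                simp [mir, mmc, mmi, mml, mlli, mmr, mmj, Xor', hr5, ha, hb, ht, hp4]
                try ring
            · by_cases ht : e ∈ (TreeAux.tp P.isTree (P.leaf i) (P.leaf l)).edges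
              · by_cases hp4 : e ∈ (TreeAux.tp P.isTree (P.leaf i) cc).edges
                · simp [mir, mmc, mmi, mml, mlli, mmr, mmj, Xor', hr5, ha, hb, ht, hp4]
                  try ring
                · simp [mir, mmc, mmi, mml, mlli, mmr, mmj, Xor', hr5, ha, hb, ht, hp4]
                  try ring
              · have hp4 : e ∉ (TreeAux.tp P.isTree (P.leaf i) cc).edges := fun h => ht (c3 h)
                simp [mir, mmc, mmi, mml, mlli, mmr, mmj, Xor', hr5, ha, hb, ht, hp4]
                try ring
      have hA2id : WTree.dd P (P.leaf j) (P.leaf i) + WTree.dd P (P.leaf m) (P.leaf r) - WTree.dd P (P.leaf j) (P.leaf r) - WTree.dd P (P.leaf m) (P.leaf i)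
          = -2 * (∑ e ∈ P.G.edgeFinset,
            if ((e ∉ (TreeAux.tp P.isTree (P.leaf i) (P.leaf j)).edges ∧ e ∉ (TreeAux.tp P.isTree (P.leaf l) (P.leaf m)).edges ∧ e ∈ (TreeAux.tp P.isTree (P.leaf i) (P.leaf l)).edges) ∧ e ∈ (TreeAux.tp P.isTree (P.leaf i) cc).edges)
              then P.w e else 0) := by
        unfold WTree.dd
        rw [Finset.mul_sum, ← Finset.sum_add_distrib, ← Finset.sum_sub_distrib,
          ← Finset.sum_sub_distrib]
        refine Finset.sum_congr rfl fun e he => ?_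
        have c1 := hC1 e
        have c3 := hC3 e
        have c4 := hC4 e
        have c5 := hC5 e
        have mji : (e ∈ (TreeAux.tp P.isTree (P.leaf j) (P.leaf i)).edges) ↔ (e ∈ (TreeAux.tp P.isTree (P.leaf i) (P.leaf j)).edges) := TreeAux.mem_tp_comm P.isTree
        have mir : (e ∈ (TreeAux.tp P.isTree (P.leaf i) (P.leaf r)).edges) ↔ Xor' (e ∈ (TreeAux.tp P.isTree (P.leaf i) cc).edges) (e ∈ (TreeAux.tp P.isTree cc (P.leaf r)).edges) := TreeAux.xor_tri P.isTree (P.leaf i) cc (P.leaf r) e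
        have mmc : (e ∈ (TreeAux.tp P.isTree (P.leaf m) cc).edges) ↔ Xor' (e ∈ (TreeAux.tp P.isTree (P.leaf m) (P.leaf i)).edges) (e ∈ (TreeAux.tp P.isTree (P.leaf i) cc).edges) := TreeAux.xor_tri P.isTree (P.leaf m) (P.leaf i) cc e
        have mmi : (e ∈ (TreeAux.tp P.isTree (P.leaf m) (P.leaf i)).edges) ↔ Xor' (e ∈ (TreeAux.tp P.isTree (P.leaf m) (P.leaf l)).edges) (e ∈ (TreeAux.tp P.isTree (P.leaf l) (P.leaf i)).edges) := TreeAux.xor_tri P.isTree (P.leaf m) (P.leaf l) (P.leaf i) e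
        have mml : (e ∈ (TreeAux.tp P.isTree (P.leaf m) (P.leaf l)).edges) ↔ (e ∈ (TreeAux.tp P.isTree (P.leaf l) (P.leaf m)).edges) := TreeAux.mem_tp_comm P.isTree
        have mlli : (e ∈ (TreeAux.tp P.isTree (P.leaf l) (P.leaf i)).edges) ↔ (e ∈ (TreeAux.tp P.isTree (P.leaf i) (P.leaf l)).edges) := TreeAux.mem_tp_comm P.isTree
        have mmr : (e ∈ (TreeAux.tp P.isTree (P.leaf m) (P.leaf r)).edges) ↔ Xor' (e ∈ (TreeAux.tp P.isTree (P.leaf m) cc).edges) (e ∈ (TreeAux.tp P.isTree cc (P.leaf r)).edges) := TreeAux.xor_tri P.isTree (P.leaf m) cc (P.leaf r) e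
        have mjr : (e ∈ (TreeAux.tp P.isTree (P.leaf j) (P.leaf r)).edges) ↔ Xor' (e ∈ (TreeAux.tp P.isTree (P.leaf j) (P.leaf i)).edges) (e ∈ (TreeAux.tp P.isTree (P.leaf i) (P.leaf r)).edges) := TreeAux.xor_tri P.isTree (P.leaf j) (P.leaf i) (P.leaf r) e
        by_cases hr5 : e ∈ (TreeAux.tp P.isTree cc (P.leaf r)).edges
        · obtain ⟨n1, n2, n3⟩ := hC2 e hr5
          have n4 : e ∉ (TreeAux.tp P.isTree (P.leaf i) cc).edges := fun h => n3 (c3 h)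
          simp [mji, mir, mmc, mmi, mml, mlli, mmr, mjr, Xor', hr5, n1, n2, n3, n4]
          try ring
        · by_cases ha : e ∈ (TreeAux.tp P.isTree (P.leaf i) (P.leaf j)).edges
          · by_cases hb : e ∈ (TreeAux.tp P.isTree (P.leaf l) (P.leaf m)).edges
            · exact absurd ⟨ha, hb⟩ c1
            · by_cases ht : e ∈ (TreeAux.tp P.isTree (P.leaf i) (P.leaf l)).edges
              · have hp4 : e ∈ (TreeAux.tp P.isTree (P.leaf i) cc).edges := c4 ha ht
                simp [mji, mir, mmc, mmi, mml, mlli, mmr, mjr, Xor', hr5, ha, hb, ht, hp4]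
                try ring
              · have hp4 : e ∉ (TreeAux.tp P.isTree (P.leaf i) cc).edges := fun h => ht (c3 h)
                simp [mji, mir, mmc, mmi, mml, mlli, mmr, mjr, Xor', hr5, ha, hb, ht, hp4]
                try ring
          · by_cases hb : e ∈ (TreeAux.tp P.isTree (P.leaf l) (P.leaf m)).edges
            · by_cases ht : e ∈ (TreeAux.tp P.isTree (P.leaf i) (P.leaf l)).edges
              · have hp4 : e ∉ (TreeAux.tp P.isTree (P.leaf i) cc).edges := fun h => c5 hb h
                simp [mji, mir, mmc, mmi, mml, mlli, mmr, mjr, Xor', hr5, ha, hb, ht, hp4]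
                try ring
              · have hp4 : e ∉ (TreeAux.tp P.isTree (P.leaf i) cc).edges := fun h => ht (c3 h)
                simp [mji, mir, mmc, mmi, mml, mlli, mmr, mjr, Xor', hr5, ha, hb, ht, hp4]
                try ring
            · by_cases ht : e ∈ (TreeAux.tp P.isTree (P.leaf i) (P.leaf l)).edges
              · by_cases hp4 : e ∈ (TreeAux.tp P.isTree (P.leaf i) cc).edges
                · simp [mji, mir, mmc, mmi, mml, mlli, mmr, mjr, Xor', hr5, ha, hb, ht, hp4]
                  try ring
                · simp [mji, mir, mmc, mmi, mml, mlli, mmr, mjr, Xor', hr5, ha, hb, ht, hp4]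
                  try ring
              · have hp4 : e ∉ (TreeAux.tp P.isTree (P.leaf i) cc).edges := fun h => ht (c3 h)
                simp [mji, mir, mmc, mmi, mml, mlli, mmr, mjr, Xor', hr5, ha, hb, ht, hp4]
                try ring
      have hA3id : WTree.dd P (P.leaf i) (P.leaf j) + WTree.dd P (P.leaf l) (P.leaf r) - WTree.dd P (P.leaf i) (P.leaf r) - WTree.dd P (P.leaf l) (P.leaf j)
          = -2 * (∑ e ∈ P.G.edgeFinset,
            if ((e ∉ (TreeAux.tp P.isTree (P.leaf i) (P.leaf j)).edges ∧ e ∉ (TreeAux.tp P.isTree (P.leaf l) (P.leaf m)).edges ∧ e ∈ (TreeAux.tp P.isTree (P.leaf i) (P.leaf l)).edges) ∧ e ∈ (TreeAux.tp P.isTree (P.leaf i) cc).edges)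
              then P.w e else 0) := by
        unfold WTree.dd
        rw [Finset.mul_sum, ← Finset.sum_add_distrib, ← Finset.sum_sub_distrib,
          ← Finset.sum_sub_distrib]
        refine Finset.sum_congr rfl fun e he => ?_
        have c1 := hC1 e
        have c3 := hC3 e
        have c4 := hC4 e
        have c5 := hC5 e
        have mir : (e ∈ (TreeAux.tp P.isTree (P.leaf i) (P.leaf r)).edges) ↔ Xor' (e ∈ (TreeAux.tp P.isTree (P.leaf i) cc).edges) (e ∈ (TreeAux.tp P.isTree cc (P.leaf r)).edges) := TreeAux.xor_tri P.isTree (P.leaf i) cc (P.leaf r) e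
        have mlr : (e ∈ (TreeAux.tp P.isTree (P.leaf l) (P.leaf r)).edges) ↔ Xor' (e ∈ (TreeAux.tp P.isTree (P.leaf l) cc).edges) (e ∈ (TreeAux.tp P.isTree cc (P.leaf r)).edges) := TreeAux.xor_tri P.isTree (P.leaf l) cc (P.leaf r) e
        have mlc : (e ∈ (TreeAux.tp P.isTree (P.leaf l) cc).edges) ↔ Xor' (e ∈ (TreeAux.tp P.isTree (P.leaf l) (P.leaf i)).edges) (e ∈ (TreeAux.tp P.isTree (P.leaf i) cc).edges) := TreeAux.xor_tri P.isTree (P.leaf l) (P.leaf i) cc e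
        have mlli : (e ∈ (TreeAux.tp P.isTree (P.leaf l) (P.leaf i)).edges) ↔ (e ∈ (TreeAux.tp P.isTree (P.leaf i) (P.leaf l)).edges) := TreeAux.mem_tp_comm P.isTree
        have mlj : (e ∈ (TreeAux.tp P.isTree (P.leaf l) (P.leaf j)).edges) ↔ Xor' (e ∈ (TreeAux.tp P.isTree (P.leaf l) (P.leaf i)).edges) (e ∈ (TreeAux.tp P.isTree (P.leaf i) (P.leaf j)).edges) := TreeAux.xor_tri P.isTree (P.leaf l) (P.leaf i) (P.leaf j) e
        by_cases hr5 : e ∈ (TreeAux.tp P.isTree cc (P.leaf r)).edges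
        · obtain ⟨n1, n2, n3⟩ := hC2 e hr5
          have n4 : e ∉ (TreeAux.tp P.isTree (P.leaf i) cc).edges := fun h => n3 (c3 h)
          simp [mir, mlr, mlc, mlli, mlj, Xor', hr5, n1, n2, n3, n4]
          try ring
        · by_cases ha : e ∈ (TreeAux.tp P.isTree (P.leaf i) (P.leaf j)).edges
          · by_cases hb : e ∈ (TreeAux.tp P.isTree (P.leaf l) (P.leaf m)).edges
            · exact absurd ⟨ha, hb⟩ c1
            · by_cases ht : e ∈ (TreeAux.tp P.isTree (P.leaf i) (P.leaf l)).edges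
              · have hp4 : e ∈ (TreeAux.tp P.isTree (P.leaf i) cc).edges := c4 ha ht
                simp [mir, mlr, mlc, mlli, mlj, Xor', hr5, ha, hb, ht, hp4]
                try ring
              · have hp4 : e ∉ (TreeAux.tp P.isTree (P.leaf i) cc).edges := fun h => ht (c3 h)
                simp [mir, mlr, mlc, mlli, mlj, Xor', hr5, ha, hb, ht, hp4]
                try ring
          · by_cases hb : e ∈ (TreeAux.tp P.isTree (P.leaf l) (P.leaf m)).edges
            · by_cases ht : e ∈ (TreeAux.tp P.isTree (P.leaf i) (P.leaf l)).edges
              · have hp4 : e ∉ (TreeAux.tp P.isTree (P.leaf i) cc).edges := fun h => c5 hb h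
                simp [mir, mlr, mlc, mlli, mlj, Xor', hr5, ha, hb, ht, hp4]
                try ring
              · have hp4 : e ∉ (TreeAux.tp P.isTree (P.leaf i) cc).edges := fun h => ht (c3 h)
                simp [mir, mlr, mlc, mlli, mlj, Xor', hr5, ha, hb, ht, hp4]
                try ring
            · by_cases ht : e ∈ (TreeAux.tp P.isTree (P.leaf i) (P.leaf l)).edges
              · by_cases hp4 : e ∈ (TreeAux.tp P.isTree (P.leaf i) cc).edges
                · simp [mir, mlr, mlc, mlli, mlj, Xor', hr5, ha, hb, ht, hp4]
                  try ring
                · simp [mir, mlr, mlc, mlli, mlj, Xor', hr5, ha, hb, ht, hp4]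
                  try ring
              · have hp4 : e ∉ (TreeAux.tp P.isTree (P.leaf i) cc).edges := fun h => ht (c3 h)
                simp [mir, mlr, mlc, mlli, mlj, Xor', hr5, ha, hb, ht, hp4]
                try ring
      have hA4id : WTree.dd P (P.leaf j) (P.leaf i) + WTree.dd P (P.leaf l) (P.leaf r) - WTree.dd P (P.leaf j) (P.leaf r) - WTree.dd P (P.leaf l) (P.leaf i)
          = -2 * (∑ e ∈ P.G.edgeFinset,
            if ((e ∉ (TreeAux.tp P.isTree (P.leaf i) (P.leaf j)).edges ∧ e ∉ (TreeAux.tp P.isTree (P.leaf l) (P.leaf m)).edges ∧ e ∈ (TreeAux.tp P.isTree (P.leaf i) (P.leaf l)).edges) ∧ e ∈ (TreeAux.tp P.isTree (P.leaf i) cc).edges)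
              then P.w e else 0) := by
        unfold WTree.dd
        rw [Finset.mul_sum, ← Finset.sum_add_distrib, ← Finset.sum_sub_distrib,
          ← Finset.sum_sub_distrib]
        refine Finset.sum_congr rfl fun e he => ?_
        have c1 := hC1 e
        have c3 := hC3 e
        have c4 := hC4 e
        have c5 := hC5 e
        have mji : (e ∈ (TreeAux.tp P.isTree (P.leaf j) (P.leaf i)).edges) ↔ (e ∈ (TreeAux.tp P.isTree (P.leaf i) (P.leaf j)).edges) := TreeAux.mem_tp_comm P.isTree
        have mir : (e ∈ (TreeAux.tp P.isTree (P.leaf i) (P.leaf r)).edges) ↔ Xor' (e ∈ (TreeAux.tp P.isTree (P.leaf i) cc).edges) (e ∈ (TreeAux.tp P.isTree cc (P.leaf r)).edges) := TreeAux.xor_tri P.isTree (P.leaf i) cc (P.leaf r) e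
        have mlr : (e ∈ (TreeAux.tp P.isTree (P.leaf l) (P.leaf r)).edges) ↔ Xor' (e ∈ (TreeAux.tp P.isTree (P.leaf l) cc).edges) (e ∈ (TreeAux.tp P.isTree cc (P.leaf r)).edges) := TreeAux.xor_tri P.isTree (P.leaf l) cc (P.leaf r) e
        have mlc : (e ∈ (TreeAux.tp P.isTree (P.leaf l) cc).edges) ↔ Xor' (e ∈ (TreeAux.tp P.isTree (P.leaf l) (P.leaf i)).edges) (e ∈ (TreeAux.tp P.isTree (P.leaf i) cc).edges) := TreeAux.xor_tri P.isTree (P.leaf l) (P.leaf i) cc e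
        have mlli : (e ∈ (TreeAux.tp P.isTree (P.leaf l) (P.leaf i)).edges) ↔ (e ∈ (TreeAux.tp P.isTree (P.leaf i) (P.leaf l)).edges) := TreeAux.mem_tp_comm P.isTree
        have mjr : (e ∈ (TreeAux.tp P.isTree (P.leaf j) (P.leaf r)).edges) ↔ Xor' (e ∈ (TreeAux.tp P.isTree (P.leaf j) (P.leaf i)).edges) (e ∈ (TreeAux.tp P.isTree (P.leaf i) (P.leaf r)).edges) := TreeAux.xor_tri P.isTree (P.leaf j) (P.leaf i) (P.leaf r) e
        by_cases hr5 : e ∈ (TreeAux.tp P.isTree cc (P.leaf r)).edges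
        · obtain ⟨n1, n2, n3⟩ := hC2 e hr5
          have n4 : e ∉ (TreeAux.tp P.isTree (P.leaf i) cc).edges := fun h => n3 (c3 h)
          simp [mji, mir, mlr, mlc, mlli, mjr, Xor', hr5, n1, n2, n3, n4]
          try ring
        · by_cases ha : e ∈ (TreeAux.tp P.isTree (P.leaf i) (P.leaf j)).edges
          · by_cases hb : e ∈ (TreeAux.tp P.isTree (P.leaf l) (P.leaf m)).edges
            · exact absurd ⟨ha, hb⟩ c1
            · by_cases ht : e ∈ (TreeAux.tp P.isTree (P.leaf i) (P.leaf l)).edges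
              · have hp4 : e ∈ (TreeAux.tp P.isTree (P.leaf i) cc).edges := c4 ha ht
                simp [mji, mir, mlr, mlc, mlli, mjr, Xor', hr5, ha, hb, ht, hp4]
                try ring
              · have hp4 : e ∉ (TreeAux.tp P.isTree (P.leaf i) cc).edges := fun h => ht (c3 h)
                simp [mji, mir, mlr, mlc, mlli, mjr, Xor', hr5, ha, hb, ht, hp4]
                try ring
          · by_cases hb : e ∈ (TreeAux.tp P.isTree (P.leaf l) (P.leaf m)).edges
            · by_cases ht : e ∈ (TreeAux.tp P.isTree (P.leaf i) (P.leaf l)).edges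
              · have hp4 : e ∉ (TreeAux.tp P.isTree (P.leaf i) cc).edges := fun h => c5 hb h
                simp [mji, mir, mlr, mlc, mlli, mjr, Xor', hr5, ha, hb, ht, hp4]
                try ring
              · have hp4 : e ∉ (TreeAux.tp P.isTree (P.leaf i) cc).edges := fun h => ht (c3 h)
                simp [mji, mir, mlr, mlc, mlli, mjr, Xor', hr5, ha, hb, ht, hp4]
                try ring
            · by_cases ht : e ∈ (TreeAux.tp P.isTree (P.leaf i) (P.leaf l)).edges
              · by_cases hp4 : e ∈ (TreeAux.tp P.isTree (P.leaf i) cc).edges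
                · simp [mji, mir, mlr, mlc, mlli, mjr, Xor', hr5, ha, hb, ht, hp4]
                  try ring
                · simp [mji, mir, mlr, mlc, mlli, mjr, Xor', hr5, ha, hb, ht, hp4]
                  try ring
              · have hp4 : e ∉ (TreeAux.tp P.isTree (P.leaf i) cc).edges := fun h => ht (c3 h)
                simp [mji, mir, mlr, mlc, mlli, mjr, Xor', hr5, ha, hb, ht, hp4]
                try ring

      refine ⟨r, hrout, ?_, ?_, ?_, ?_⟩
      · intro heq
        have hc := WTree.D_comb P i j m r l
        rw [hsum_single] at hA1id
        exact hw1 (by linarith)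
      · intro heq
        have hc := WTree.D_comb P j i m r l
        rw [hsum_single] at hA2id
        exact hw1 (by linarith)
      · intro heq
        have hc := WTree.D_comb P i j l r m
        rw [hsum_single] at hA3id
        exact hw1 (by linarith)
      · intro heq
        have hc := WTree.D_comb P j i l r m
        rw [hsum_single] at hA4id
        exact hw1 (by linarith)

    · -- nonzero bridge weight : use option (b)
      right
      intro r hr
      have hB1id : WTree.dd P (P.leaf i) (P.leaf j) + WTree.dd P (P.leaf m) (P.leaf l) - WTree.dd P (P.leaf i) (P.leaf m) - WTree.dd P (P.leaf j) (P.leaf l)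
          = -2 * (∑ e ∈ P.G.edgeFinset,
            if (e ∉ (TreeAux.tp P.isTree  (P.leaf i) (P.leaf j)).edges ∧ e ∉ (TreeAux.tp P.isTree  (P.leaf l) (P.leaf m)).edges ∧ e ∈ (TreeAux.tp P.isTree  (P.leaf i) (P.leaf l)).edges)
              then P.w e else 0) := by
        unfold WTree.dd
        rw [Finset.mul_sum, ← Finset.sum_add_distrib, ← Finset.sum_sub_distrib,
          ← Finset.sum_sub_distrib]
        refine Finset.sum_congr rfl fun e he => ?_
        have mml : (e ∈ (TreeAux.tp P.isTree  (P.leaf m) (P.leaf l)).edges) ↔ (e ∈ (TreeAux.tp P.isTree  (P.leaf l) (P.leaf m)).edges) := TreeAux.mem_tp_comm hG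
        have mji : (e ∈ (TreeAux.tp P.isTree  (P.leaf j) (P.leaf i)).edges) ↔ (e ∈ (TreeAux.tp P.isTree  (P.leaf i) (P.leaf j)).edges) := TreeAux.mem_tp_comm hG
        have mim : (e ∈ (TreeAux.tp P.isTree  (P.leaf i) (P.leaf m)).edges)
            ↔ Xor' (e ∈ (TreeAux.tp P.isTree  (P.leaf i) (P.leaf l)).edges) (e ∈ (TreeAux.tp P.isTree  (P.leaf l) (P.leaf m)).edges) := TreeAux.xor_tri hG (P.leaf i) (P.leaf l) (P.leaf m) e
        have mjl : (e ∈ (TreeAux.tp P.isTree  (P.leaf j) (P.leaf l)).edges)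
            ↔ Xor' (e ∈ (TreeAux.tp P.isTree  (P.leaf j) (P.leaf i)).edges) (e ∈ (TreeAux.tp P.isTree  (P.leaf i) (P.leaf l)).edges) := TreeAux.xor_tri hG (P.leaf j) (P.leaf i) (P.leaf l) e
        have c1 := hC1 e
        by_cases ha : e ∈ (TreeAux.tp P.isTree  (P.leaf i) (P.leaf j)).edges
        · by_cases hb : e ∈ (TreeAux.tp P.isTree  (P.leaf l) (P.leaf m)).edges
          · exact absurd ⟨ha, hb⟩ c1
          · by_cases ht : e ∈ (TreeAux.tp P.isTree  (P.leaf i) (P.leaf l)).edges <;>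
              (simp [mml, mji, mim, mjl, Xor', ha, hb, ht]; try ring)
        · by_cases hb : e ∈ (TreeAux.tp P.isTree  (P.leaf l) (P.leaf m)).edges <;>
            by_cases ht : e ∈ (TreeAux.tp P.isTree  (P.leaf i) (P.leaf l)).edges <;>
              (simp [mml, mji, mim, mjl, Xor', ha, hb, ht]; try ring)
      have hB2id : WTree.dd P (P.leaf i) (P.leaf j) + WTree.dd P (P.leaf m) (P.leaf l) - WTree.dd P (P.leaf i) (P.leaf l) - WTree.dd P (P.leaf j) (P.leaf m)
          = -2 * (∑ e ∈ P.G.edgeFinset,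
            if (e ∉ (TreeAux.tp P.isTree  (P.leaf i) (P.leaf j)).edges ∧ e ∉ (TreeAux.tp P.isTree  (P.leaf l) (P.leaf m)).edges ∧ e ∈ (TreeAux.tp P.isTree  (P.leaf i) (P.leaf l)).edges)
              then P.w e else 0) := by
        unfold WTree.dd
        rw [Finset.mul_sum, ← Finset.sum_add_distrib, ← Finset.sum_sub_distrib,
          ← Finset.sum_sub_distrib]
        refine Finset.sum_congr rfl fun e he => ?_
        have mml : (e ∈ (TreeAux.tp P.isTree  (P.leaf m) (P.leaf l)).edges) ↔ (e ∈ (TreeAux.tp P.isTree  (P.leaf l) (P.leaf m)).edges) := TreeAux.mem_tp_comm hG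
        have mji : (e ∈ (TreeAux.tp P.isTree  (P.leaf j) (P.leaf i)).edges) ↔ (e ∈ (TreeAux.tp P.isTree  (P.leaf i) (P.leaf j)).edges) := TreeAux.mem_tp_comm hG
        have mim : (e ∈ (TreeAux.tp P.isTree  (P.leaf i) (P.leaf m)).edges)
            ↔ Xor' (e ∈ (TreeAux.tp P.isTree  (P.leaf i) (P.leaf l)).edges) (e ∈ (TreeAux.tp P.isTree  (P.leaf l) (P.leaf m)).edges) := TreeAux.xor_tri hG (P.leaf i) (P.leaf l) (P.leaf m) e
        have mjm : (e ∈ (TreeAux.tp P.isTree  (P.leaf j) (P.leaf m)).edges)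
            ↔ Xor' (e ∈ (TreeAux.tp P.isTree  (P.leaf j) (P.leaf i)).edges) (e ∈ (TreeAux.tp P.isTree  (P.leaf i) (P.leaf m)).edges) := TreeAux.xor_tri hG (P.leaf j) (P.leaf i) (P.leaf m) e
        have c1 := hC1 e
        by_cases ha : e ∈ (TreeAux.tp P.isTree  (P.leaf i) (P.leaf j)).edges
        · by_cases hb : e ∈ (TreeAux.tp P.isTree  (P.leaf l) (P.leaf m)).edges
          · exact absurd ⟨ha, hb⟩ c1
          · by_cases ht : e ∈ (TreeAux.tp P.isTree  (P.leaf i) (P.leaf l)).edges <;>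
              (simp [mml, mji, mim, mjm, Xor', ha, hb, ht]; try ring)
        · by_cases hb : e ∈ (TreeAux.tp P.isTree  (P.leaf l) (P.leaf m)).edges <;>
            by_cases ht : e ∈ (TreeAux.tp P.isTree  (P.leaf i) (P.leaf l)).edges <;>
              (simp [mml, mji, mim, mjm, Xor', ha, hb, ht]; try ring)
      have hD1 : P.D {m, l, r} = P.D {l, m, r} := by
        congr 1
        ext x; simp; tauto
      have hD2 : P.D {j, l, r} = P.D {l, j, r} := by
        congr 1
        ext x; simp; tauto
      have hD3 : P.D {j, m, r} = P.D {m, j, r} := by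
        congr 1
        ext x; simp; tauto
      constructor
      · intro heq
        have hc := WTree.D_comb P i j l m r
        have d1 := WTree.dd_comm P (P.leaf l) (P.leaf m)
        have d2 := WTree.dd_comm P (P.leaf l) (P.leaf j)
        exact hs (by linarith)
      · intro heq
        have hc := WTree.D_comb P i j m l r
        have d1 := WTree.dd_comm P (P.leaf m) (P.leaf j)
        exact hs (by linarith)
  · -- backward direction
    rintro (⟨r, hr, h1, h2, h3, h4⟩ | hb)
    · -- case (a)
      have hA1 : WTree.dd P (P.leaf i) (P.leaf j) + WTree.dd P (P.leaf m) (P.leaf r) - WTree.dd P (P.leaf i) (P.leaf r) - WTree.dd P (P.leaf m) (P.leaf j) ≠ 0 := by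
        intro h0
        exact h1 (by have hc := WTree.D_comb P i j m r l; linarith)
      have hA2 : WTree.dd P (P.leaf j) (P.leaf i) + WTree.dd P (P.leaf m) (P.leaf r) - WTree.dd P (P.leaf j) (P.leaf r) - WTree.dd P (P.leaf m) (P.leaf i) ≠ 0 := by
        intro h0
        exact h2 (by have hc := WTree.D_comb P j i m r l; linarith)
      have hA3 : WTree.dd P (P.leaf i) (P.leaf j) + WTree.dd P (P.leaf l) (P.leaf r) - WTree.dd P (P.leaf i) (P.leaf r) - WTree.dd P (P.leaf l) (P.leaf j) ≠ 0 := by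
        intro h0
        exact h3 (by have hc := WTree.D_comb P i j l r m; linarith)
      have hA4 : WTree.dd P (P.leaf j) (P.leaf i) + WTree.dd P (P.leaf l) (P.leaf r) - WTree.dd P (P.leaf j) (P.leaf r) - WTree.dd P (P.leaf l) (P.leaf i) ≠ 0 := by
        intro h0
        exact h4 (by have hc := WTree.D_comb P j i l r m; linarith)
      have hd1 : ∀ x, x ∈ (TreeAux.tp P.isTree  (P.leaf i) (P.leaf j)).support → x ∉ (TreeAux.tp P.isTree  (P.leaf m) (P.leaf r)).support := by
        intro x hx1 hx2
        rcases WTree.meet_zero P hx1 hx2 with h0 | h0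
        · refine hA2 ?_
          have d1 := WTree.dd_comm P (P.leaf i) (P.leaf j)
          have d2 := WTree.dd_comm P (P.leaf i) (P.leaf m)
          have d3 := WTree.dd_comm P (P.leaf j) (P.leaf r)
          linarith
        · refine hA1 ?_
          have d1 := WTree.dd_comm P (P.leaf j) (P.leaf m)
          linarith
      have hd2 : ∀ x, x ∈ (TreeAux.tp P.isTree  (P.leaf i) (P.leaf j)).support → x ∉ (TreeAux.tp P.isTree  (P.leaf l) (P.leaf r)).support := by
        intro x hx1 hx2
        rcases WTree.meet_zero P hx1 hx2 with h0 | h0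
        · refine hA4 ?_
          have d1 := WTree.dd_comm P (P.leaf i) (P.leaf j)
          have d2 := WTree.dd_comm P (P.leaf i) (P.leaf l)
          have d3 := WTree.dd_comm P (P.leaf j) (P.leaf r)
          linarith
        · refine hA3 ?_
          have d1 := WTree.dd_comm P (P.leaf j) (P.leaf l)
          linarith
      rw [WTree.buneman_iff]
      intro v hv hv2
      rcases TreeAux.support_union hG (P.leaf l) (P.leaf m) (P.leaf r) hv2 with h5 | h5
      · exact hd2 v hv h5
      · exact hd1 v hv ((TreeAux.support_tp_comm hG).mp h5)
    · -- case (b)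
      obtain ⟨r, hr⟩ : ∃ r : Fin n, r ∉ ({i, j, l, m} : Finset (Fin n)) := by
        by_contra hcon
        push_neg at hcon
        have hsub : (Finset.univ : Finset (Fin n)) ⊆ {i, j, l, m} := fun x _ => hcon x
        have hcard2 := Finset.card_le_card hsub
        rw [hcard, Finset.card_univ, Fintype.card_fin] at hcard2
        omega
      obtain ⟨hb1, hb2⟩ := hb r hr
      have hD1 : P.D {m, l, r} = P.D {l, m, r} := by
        congr 1
        ext x; simp; tauto
      have hD2 : P.D {j, l, r} = P.D {l, j, r} := by
        congr 1
        ext x; simp; tauto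
      have hD3 : P.D {j, m, r} = P.D {m, j, r} := by
        congr 1
        ext x; simp; tauto
      have hB1 : WTree.dd P (P.leaf i) (P.leaf j) + WTree.dd P (P.leaf l) (P.leaf m) - WTree.dd P (P.leaf i) (P.leaf m) - WTree.dd P (P.leaf j) (P.leaf l) ≠ 0 := by
        intro h0
        refine hb1 ?_
        have hc := WTree.D_comb P i j l m r
        have d2 := WTree.dd_comm P (P.leaf l) (P.leaf j)
        linarith
      have hB2 : WTree.dd P (P.leaf i) (P.leaf j) + WTree.dd P (P.leaf l) (P.leaf m) - WTree.dd P (P.leaf i) (P.leaf l) - WTree.dd P (P.leaf j) (P.leaf m) ≠ 0 := by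
        intro h0
        refine hb2 ?_
        have hc := WTree.D_comb P i j m l r
        have d1 := WTree.dd_comm P (P.leaf m) (P.leaf l)
        have d2 := WTree.dd_comm P (P.leaf m) (P.leaf j)
        linarith
      rw [WTree.buneman_iff]
      intro v hv hv2
      rcases WTree.meet_zero P hv hv2 with h0 | h0
      · exact hB2 h0
      · exact hB1 h0
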